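/- arXiv:1401.4154 — 5 statements merged into one kernel-verified Lean document; each statement's English description precedes it below -/
import Mathlib

section
/- Let n, m ≥ 1 and let h be a real array indexed by α ∈ {1,…,m} and i,j ∈ {1,…,n} which is symmetric in the last two indices, i.e. h_{αij} = h_{αji} for all α, i, j (equivalently, let A_1,…,A_m be symmetric real n×n matrices with entries (A_α)_{ij} = h_{αij}). Set |A|² = ∑_{α,i,j} h_{αij}². Then 2 ∑_{α,γ=1}^{m} ∑_{i,m'=1}^{n} ( ∑_{k=1}^{n} ( h_{αik} h_{γm'k} − h_{αm'k} h_{γik} ) )² + 2 ∑_{i,j,m',k=1}^{n} ( ∑_{α=1}^{m} h_{αij} h_{αm'k} )² ≤ 3 |A|⁴. Equivalently, 2 ∑_{α,γ} ‖A_α A_γ − A_γ A_α‖_F² + 2 ∑_{α,β} ( tr(A_α A_β) )² ≤ 3 ( ∑_α ‖A_α‖_F² )², where ‖·‖_F is the Frobenius norm. -/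
namespace LiLi

open Finset

/-- Frobenius inner product of two square arrays. -/
def dot {N : ℕ} (X Y : Fin N → Fin N → ℝ) : ℝ := ∑ i, ∑ j, X i j * Y i j

/-- Squared Frobenius norm of the commutator. -/
def cns {N : ℕ} (X Y : Fin N → Fin N → ℝ) : ℝ :=
  ∑ i, ∑ k, (∑ j, (X i j * Y j k - Y i j * X j k)) ^ 2

lemma dot_comm {N : ℕ} (X Y : Fin N → Fin N → ℝ) : dot X Y = dot Y X := by
  unfold dot; exact sum_congr rfl fun i _ => sum_congr rfl fun j _ => mul_comm _ _

lemma dot_self_nonneg {N : ℕ} (X : Fin N → Fin N → ℝ) : 0 ≤ dot X X :=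
  sum_nonneg fun i _ => sum_nonneg fun j _ => mul_self_nonneg _

lemma dot_self_eq_zero {N : ℕ} {X : Fin N → Fin N → ℝ} (h : dot X X = 0) :
    ∀ i j, X i j = 0 := by
  intro i j
  have h1 : ∀ i ∈ (univ : Finset (Fin N)), 0 ≤ ∑ j, X i j * X i j :=
    fun i _ => sum_nonneg fun j _ => mul_self_nonneg _
  have h2 := (sum_eq_zero_iff_of_nonneg h1).1 h i (mem_univ i)
  have h3 := (sum_eq_zero_iff_of_nonneg (fun j _ => mul_self_nonneg (X i j))).1 h2 j (mem_univ j)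
  exact mul_self_eq_zero.1 h3

lemma cns_comm {N : ℕ} (X Y : Fin N → Fin N → ℝ) : cns X Y = cns Y X := by
  unfold cns
  refine sum_congr rfl fun i _ => sum_congr rfl fun k _ => ?_
  have : (∑ j, (X i j * Y j k - Y i j * X j k)) = -(∑ j, (Y i j * X j k - X i j * Y j k)) := by
    rw [← Finset.sum_neg_distrib]
    exact sum_congr rfl fun j _ => by ring
  rw [this, neg_sq]

lemma cns_self {N : ℕ} (X : Fin N → Fin N → ℝ) : cns X X = 0 := by
  unfold cns
  refine sum_eq_zero fun i _ => sum_eq_zero fun k _ => ?_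
  rw [sum_eq_zero fun j _ => sub_self _]
  norm_num


lemma sum_out3 {N m : ℕ} (G : Fin m → Fin N → Fin N → ℝ) :
    ∑ i, ∑ j, ∑ r, G r i j = ∑ r, ∑ i, ∑ j, G r i j := by
  calc ∑ i, ∑ j, ∑ r, G r i j = ∑ i, ∑ r, ∑ j, G r i j :=
        sum_congr rfl fun i _ => Finset.sum_comm
    _ = ∑ r, ∑ i, ∑ j, G r i j := Finset.sum_comm

lemma sum_out4 {N m : ℕ} (G : Fin m → Fin m → Fin N → Fin N → ℝ) :
    ∑ i, ∑ j, ∑ r, ∑ s, G r s i j = ∑ r, ∑ s, ∑ i, ∑ j, G r s i j := by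
  calc ∑ i, ∑ j, ∑ r, ∑ s, G r s i j = ∑ r, ∑ i, ∑ j, ∑ s, G r s i j :=
        sum_out3 (fun r i j => ∑ s, G r s i j)
    _ = ∑ r, ∑ s, ∑ i, ∑ j, G r s i j :=
        sum_congr rfl fun r _ => sum_out3 (fun s i j => G r s i j)

/-- Parseval for a square-preserving linear transform of vectors. -/
lemma vparseval {M : ℕ} {v : Fin M → Fin M → ℝ}
    (hcompl : ∀ i j, ∑ t, v t i * v t j = if i = j then 1 else 0)
    (u : Fin M → ℝ) : ∑ t, (∑ i, v t i * u i) ^ 2 = ∑ i, (u i) ^ 2 := by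
  calc ∑ t, (∑ i, v t i * u i) ^ 2
      = ∑ t, ∑ i, ∑ k, (v t i * u i) * (v t k * u k) := by
        refine sum_congr rfl fun t _ => ?_
        rw [sq, Finset.sum_mul_sum]
    _ = ∑ i, ∑ k, (u i * u k) * (∑ t, v t i * v t k) := by
        rw [Finset.sum_comm]
        refine sum_congr rfl fun i _ => ?_
        rw [Finset.sum_comm]
        refine sum_congr rfl fun k _ => ?_
        rw [Finset.mul_sum]
        exact sum_congr rfl fun t _ => by ring
    _ = ∑ i, (u i) ^ 2 := by
        refine sum_congr rfl fun i _ => ?_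
        simp only [hcompl, mul_ite, mul_one, mul_zero, Finset.sum_ite_eq, mem_univ, if_true]
        ring

lemma vparseval2 {M : ℕ} {v : Fin M → Fin M → ℝ}
    (hcompl : ∀ i j, ∑ t, v t i * v t j = if i = j then 1 else 0)
    (K : Fin M → Fin M → ℝ) :
    ∑ r, ∑ s, (∑ α, ∑ γ, v r α * v s γ * K α γ) ^ 2 = ∑ α, ∑ γ, (K α γ) ^ 2 := by
  have hinner : ∀ r s, (∑ α, ∑ γ, v r α * v s γ * K α γ)
      = ∑ α, v r α * (∑ γ, v s γ * K α γ) := by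
    intro r s
    refine sum_congr rfl fun α _ => ?_
    rw [Finset.mul_sum]
    exact sum_congr rfl fun γ _ => by ring
  calc ∑ r, ∑ s, (∑ α, ∑ γ, v r α * v s γ * K α γ) ^ 2
      = ∑ s, ∑ r, (∑ α, v r α * (∑ γ, v s γ * K α γ)) ^ 2 := by
        rw [Finset.sum_comm]
        exact sum_congr rfl fun s _ => sum_congr rfl fun r _ => by rw [hinner]
    _ = ∑ s, ∑ α, (∑ γ, v s γ * K α γ) ^ 2 := by
        exact sum_congr rfl fun s _ => vparseval hcompl _
    _ = ∑ α, ∑ s, (∑ γ, v s γ * K α γ) ^ 2 := Finset.sum_comm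
    _ = ∑ α, ∑ γ, (K α γ) ^ 2 := sum_congr rfl fun α _ => vparseval hcompl _

/-- Spectral theorem for a real symmetric array. -/
theorem real_spectral {M : ℕ} (f : Fin M → Fin M → ℝ) (hf : ∀ i j, f i j = f j i) :
    ∃ (a : Fin M → ℝ) (v : Fin M → Fin M → ℝ),
      (∀ t t', ∑ i, v t i * v t' i = if t = t' then 1 else 0) ∧
      (∀ i j, ∑ t, v t i * v t j = if i = j then 1 else 0) ∧
      (∀ i j, f i j = ∑ t, a t * v t i * v t j) := by
  set A : Matrix (Fin M) (Fin M) ℝ := Matrix.of f with hA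
  have hHerm : A.IsHermitian := by
    ext i j
    simp [Matrix.conjTranspose_apply, hA, hf i j]
  refine ⟨hHerm.eigenvalues, fun t i => (hHerm.eigenvectorUnitary : Matrix (Fin M) (Fin M) ℝ) i t,
    ?_, ?_, ?_⟩
  · intro t t'
    have h1 : (star (hHerm.eigenvectorUnitary : Matrix (Fin M) (Fin M) ℝ)) *
        (hHerm.eigenvectorUnitary : Matrix (Fin M) (Fin M) ℝ) = 1 :=
      Unitary.coe_star_mul_self _
    have := congrFun (congrFun h1 t) t'
    simpa [Matrix.mul_apply, Matrix.conjTranspose_apply, Matrix.one_apply, mul_comm] using this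
  · intro i j
    have h1 : (hHerm.eigenvectorUnitary : Matrix (Fin M) (Fin M) ℝ) *
        (star (hHerm.eigenvectorUnitary : Matrix (Fin M) (Fin M) ℝ)) = 1 :=
      Unitary.coe_mul_star_self _
    have := congrFun (congrFun h1 i) j
    simpa [Matrix.mul_apply, Matrix.conjTranspose_apply, Matrix.one_apply] using this
  · intro i j
    have h3 : A i j = ∑ t, hHerm.eigenvalues t *
        (hHerm.eigenvectorUnitary : Matrix (Fin M) (Fin M) ℝ) i t *
        (hHerm.eigenvectorUnitary : Matrix (Fin M) (Fin M) ℝ) j t := by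
      nth_rewrite 1 [hHerm.spectral_theorem]
      simp only [Unitary.conjStarAlgAut_apply, Matrix.mul_apply, Matrix.mul_diagonal, Matrix.conjTranspose_apply,
        Function.comp_apply, RCLike.star_def, Matrix.diagonal_apply, mul_ite, mul_zero,
        Finset.sum_ite_eq', Finset.mem_univ, if_true, Matrix.star_apply, star_trivial,
        starRingEnd_apply, RCLike.ofReal_real_eq_id, id_eq]
      refine Finset.sum_congr rfl fun t _ => ?_
      ring
    simpa [hA] using h3



private lemma arith3 (x y z L : ℝ) (h1 : 3/2 * L < (x - y)^2) (h2 : 3/2 * L < (x - z)^2)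
    (hsum : x^2 + y^2 + z^2 ≤ L) : False := by
  nlinarith [sq_nonneg (x + y + z), sq_nonneg (y - z)]

private lemma arith4 (x y z w L : ℝ) (h1 : 3/2 * L < (x - y)^2) (h2 : 3/2 * L < (z - w)^2)
    (hsum : x^2 + y^2 + z^2 + w^2 ≤ L) (hL : 0 ≤ L) : False := by
  nlinarith [sq_nonneg (x + y), sq_nonneg (z + w)]

set_option maxHeartbeats 4000000 in
/-- The HOT lemma: a symmetric array `A` admits a direction `E` of norm `≤ 1` such that the
commutator with any symmetric `C` is controlled by `(3/2)‖A‖²‖C‖² + (1/2)‖A‖²⟨C,E⟩²`. -/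
theorem hot {N : ℕ} (A : Fin N → Fin N → ℝ) (hA : ∀ i j, A i j = A j i) :
    ∃ E : Fin N → Fin N → ℝ, dot E E ≤ 1 ∧
      ∀ C : Fin N → Fin N → ℝ, (∀ i j, C i j = C j i) →
        cns A C ≤ (3/2) * dot A A * dot C C + (1/2) * dot A A * (dot C E) ^ 2 := by
  obtain ⟨a, v, horth, hcompl, hrepr⟩ := real_spectral A hA
  have hlam0 : 0 ≤ dot A A := dot_self_nonneg A
  -- contraction identities
  have hcontr : ∀ (t j : Fin N), ∑ i, v t i * A i j = a t * v t j := by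
    intro t j
    calc ∑ i, v t i * A i j = ∑ i, ∑ u, (a u * v u j) * (v t i * v u i) := by
          refine sum_congr rfl fun i _ => ?_
          rw [hrepr i j, Finset.mul_sum]
          exact sum_congr rfl fun u _ => by ring
      _ = ∑ u, (a u * v u j) * ∑ i, v t i * v u i := by
          rw [Finset.sum_comm]
          exact sum_congr rfl fun u _ => by rw [Finset.mul_sum]
      _ = a t * v t j := by
          simp only [horth, mul_ite, mul_one, mul_zero]
          rw [Finset.sum_ite_eq univ t (fun u => a u * v u j)]
          simp
  have hcontr2 : ∀ (s j : Fin N), ∑ k, A j k * v s k = a s * v s j := by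
    intro s j
    calc ∑ k, A j k * v s k = ∑ k, v s k * A k j :=
          sum_congr rfl fun k _ => by rw [hA j k]; ring
      _ = a s * v s j := hcontr s j
  -- lam = sum of squares of eigenvalues
  have hlam_eq : dot A A = ∑ t, (a t) ^ 2 := by
    unfold dot
    calc ∑ i, ∑ j, A i j * A i j
        = ∑ i, ∑ j, ∑ t, (a t * v t i) * (v t j * A i j) := by
          refine sum_congr rfl fun i _ => sum_congr rfl fun j _ => ?_
          rw [hrepr i j, Finset.sum_mul]
          exact sum_congr rfl fun t _ => by ring
      _ = ∑ t, ∑ i, ∑ j, (a t * v t i) * (v t j * A i j) := sum_out3 _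
      _ = ∑ t, ∑ i, (a t * v t i) * (a t * v t i) := by
          refine sum_congr rfl fun t _ => sum_congr rfl fun i _ => ?_
          rw [← Finset.mul_sum]
          congr 1
          have : ∑ j, v t j * A i j = ∑ j, A i j * v t j :=
            sum_congr rfl fun j _ => mul_comm _ _
          rw [this, hcontr2 t i]
      _ = ∑ t, (a t) ^ 2 * ∑ i, v t i * v t i := by
          refine sum_congr rfl fun t _ => ?_
          rw [Finset.mul_sum]
          exact sum_congr rfl fun i _ => by ring
      _ = ∑ t, (a t) ^ 2 := by
          refine sum_congr rfl fun t _ => ?_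
          rw [horth t t]
          simp
  -- Parseval for the basis transform
  have hpars : ∀ D : Fin N → Fin N → ℝ,
      ∑ t, ∑ s, (∑ i, ∑ j, v t i * D i j * v s j) ^ 2 = ∑ i, ∑ j, (D i j) ^ 2 := by
    intro D
    have := vparseval2 hcompl D
    rw [← this]
    refine sum_congr rfl fun t _ => sum_congr rfl fun s _ => ?_
    congr 1
    exact sum_congr rfl fun i _ => sum_congr rfl fun j _ => by ring
  -- transform of the commutator: key identity
  have dtrans : ∀ (C : Fin N → Fin N → ℝ) (t s : Fin N),
      ∑ i, ∑ j, v t i * (∑ k, (A i k * C k j - C i k * A k j)) * v s j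
        = (a t - a s) * ∑ i, ∑ j, v t i * C i j * v s j := by
    intro C t s
    have esplit : ∀ i j : Fin N, v t i * (∑ k, (A i k * C k j - C i k * A k j)) * v s j
        = (∑ k, v t i * A i k * C k j * v s j) - (∑ k, v t i * C i k * A k j * v s j) := by
      intro i j
      rw [← Finset.sum_sub_distrib, Finset.mul_sum, Finset.sum_mul]
      exact sum_congr rfl fun k _ => by ring
    have eA : ∑ i, ∑ j, ∑ k, v t i * A i k * C k j * v s j
        = a t * ∑ i, ∑ j, v t i * C i j * v s j := by
      calc ∑ i, ∑ j, ∑ k, v t i * A i k * C k j * v s j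
          = ∑ i, ∑ k, ∑ j, v t i * A i k * C k j * v s j :=
            sum_congr rfl fun i _ => Finset.sum_comm
        _ = ∑ k, ∑ i, ∑ j, v t i * A i k * C k j * v s j := Finset.sum_comm
        _ = ∑ k, (∑ i, v t i * A i k) * (∑ j, C k j * v s j) := by
            refine sum_congr rfl fun k _ => ?_
            rw [Finset.sum_mul_sum]
            exact sum_congr rfl fun i _ => sum_congr rfl fun j _ => by ring
        _ = ∑ k, a t * (v t k * ∑ j, C k j * v s j) := by
            refine sum_congr rfl fun k _ => ?_
            rw [hcontr t k]
            ring
        _ = a t * ∑ i, ∑ j, v t i * C i j * v s j := by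
            rw [← Finset.mul_sum]
            congr 1
            refine sum_congr rfl fun k _ => ?_
            rw [Finset.mul_sum]
            exact sum_congr rfl fun j _ => by ring
    have eB : ∑ i, ∑ j, ∑ k, v t i * C i k * A k j * v s j
        = a s * ∑ i, ∑ j, v t i * C i j * v s j := by
      calc ∑ i, ∑ j, ∑ k, v t i * C i k * A k j * v s j
          = ∑ i, ∑ k, ∑ j, v t i * C i k * A k j * v s j :=
            sum_congr rfl fun i _ => Finset.sum_comm
        _ = ∑ i, ∑ k, v t i * C i k * (a s * v s k) := by
            refine sum_congr rfl fun i _ => sum_congr rfl fun k _ => ?_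
            rw [← hcontr2 s k, Finset.mul_sum]
            exact sum_congr rfl fun j _ => by ring
        _ = a s * ∑ i, ∑ j, v t i * C i j * v s j := by
            rw [Finset.mul_sum]
            refine sum_congr rfl fun i _ => ?_
            rw [Finset.mul_sum]
            exact sum_congr rfl fun k _ => by ring
    calc ∑ i, ∑ j, v t i * (∑ k, (A i k * C k j - C i k * A k j)) * v s j
        = ∑ i, ∑ j, ((∑ k, v t i * A i k * C k j * v s j)
            - (∑ k, v t i * C i k * A k j * v s j)) :=
          sum_congr rfl fun i _ => sum_congr rfl fun j _ => esplit i j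
      _ = (∑ i, ∑ j, ∑ k, v t i * A i k * C k j * v s j)
            - (∑ i, ∑ j, ∑ k, v t i * C i k * A k j * v s j) := by
          rw [← Finset.sum_sub_distrib]
          exact sum_congr rfl fun i _ => by rw [← Finset.sum_sub_distrib]
      _ = (a t - a s) * ∑ i, ∑ j, v t i * C i j * v s j := by
          rw [eA, eB]
          ring
  have keyid : ∀ C : Fin N → Fin N → ℝ,
      cns A C = ∑ t, ∑ s, ((a t - a s) * ∑ i, ∑ j, v t i * C i j * v s j) ^ 2 := by
    intro C
    have h1 : cns A C = ∑ i, ∑ j, ((fun i k => ∑ u, (A i u * C u k - C i u * A u k)) i j) ^ 2 :=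
      rfl
    rw [h1, ← hpars (fun i k => ∑ u, (A i u * C u k - C i u * A u k))]
    exact sum_congr rfl fun t _ => sum_congr rfl fun s _ => by rw [dtrans C t s]
  rcases isEmpty_or_nonempty (Fin N) with hN | hN
  · refine ⟨fun _ _ => 0, by unfold dot; simp, fun C hC => ?_⟩
    unfold cns dot
    simp
  obtain ⟨p₀, _, hp₀max⟩ := Finset.exists_max_image (univ ×ˢ univ)
    (fun p => (a p.1 - a p.2) ^ 2) (by simp [Finset.univ_nonempty])
  set t₀ := p₀.1 with ht₀
  set s₀ := p₀.2 with hs₀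
  have hmax : ∀ t s : Fin N, (a t - a s) ^ 2 ≤ (a t₀ - a s₀) ^ 2 := fun t s =>
    hp₀max (t, s) (by simp)
  -- subset sum bounds
  have hsub2 : ∀ x y : Fin N, x ≠ y → a x ^ 2 + a y ^ 2 ≤ dot A A := by
    intro x y hxy
    rw [hlam_eq]
    have he : a x ^ 2 + a y ^ 2 = ∑ u ∈ ({x, y} : Finset (Fin N)), a u ^ 2 := by
      rw [Finset.sum_insert (by simp [hxy]), Finset.sum_singleton]
    rw [he]
    exact Finset.sum_le_sum_of_subset_of_nonneg (subset_univ _)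
      (fun u _ _ => sq_nonneg _)
  have hsub3 : ∀ x y z : Fin N, x ≠ y → x ≠ z → y ≠ z →
      a x ^ 2 + a y ^ 2 + a z ^ 2 ≤ dot A A := by
    intro x y z hxy hxz hyz
    rw [hlam_eq]
    have he : a x ^ 2 + a y ^ 2 + a z ^ 2 = ∑ u ∈ ({x, y, z} : Finset (Fin N)), a u ^ 2 := by
      rw [Finset.sum_insert (by simp [hxy, hxz]), Finset.sum_insert (by simp [hyz]),
        Finset.sum_singleton]
      ring
    rw [he]
    exact Finset.sum_le_sum_of_subset_of_nonneg (subset_univ _)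
      (fun u _ _ => sq_nonneg _)
  have hsub4 : ∀ x y z w : Fin N, x ≠ y → x ≠ z → x ≠ w → y ≠ z → y ≠ w → z ≠ w →
      a x ^ 2 + a y ^ 2 + a z ^ 2 + a w ^ 2 ≤ dot A A := by
    intro x y z w hxy hxz hxw hyz hyw hzw
    rw [hlam_eq]
    have he : a x ^ 2 + a y ^ 2 + a z ^ 2 + a w ^ 2
        = ∑ u ∈ ({x, y, z, w} : Finset (Fin N)), a u ^ 2 := by
      rw [Finset.sum_insert (by simp [hxy, hxz, hxw]),
        Finset.sum_insert (by simp [hyz, hyw]), Finset.sum_insert (by simp [hzw]),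
        Finset.sum_singleton]
      ring
    rw [he]
    exact Finset.sum_le_sum_of_subset_of_nonneg (subset_univ _)
      (fun u _ _ => sq_nonneg _)
  by_cases hcase : (a t₀ - a s₀) ^ 2 ≤ (3/2) * dot A A
  · -- no hot pair: E = 0 works
    refine ⟨fun _ _ => 0, by unfold dot; simp, fun C hC => ?_⟩
    have hdotE : dot C (fun _ _ => 0) = 0 := by unfold dot; simp
    rw [hdotE]
    -- cns A C = ∑ gaps² c² ≤ (3/2) lam ∑ c²
    set c : Fin N → Fin N → ℝ := fun t s => ∑ i, ∑ j, v t i * C i j * v s j with hcdef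
    have keyidC : cns A C = ∑ t, ∑ s, ((a t - a s) * c t s) ^ 2 := keyid C
    have hparsC : ∑ t, ∑ s, (c t s) ^ 2 = dot C C := by
      unfold dot
      rw [hpars C]
      exact sum_congr rfl fun i _ => sum_congr rfl fun j _ => by rw [sq]
    rw [keyidC]
    have hb : ∀ t s : Fin N, ((a t - a s) * c t s) ^ 2 ≤ (3/2) * dot A A * (c t s) ^ 2 := by
      intro t s
      rw [mul_pow]
      exact mul_le_mul_of_nonneg_right (le_trans (hmax t s) hcase) (sq_nonneg _)
    calc ∑ t, ∑ s, ((a t - a s) * c t s) ^ 2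
        ≤ ∑ t, ∑ s, (3/2) * dot A A * (c t s) ^ 2 :=
          sum_le_sum fun t _ => sum_le_sum fun s _ => hb t s
      _ = (3/2) * dot A A * ∑ t, ∑ s, (c t s) ^ 2 := by
          rw [Finset.mul_sum]
          exact sum_congr rfl fun t _ => by rw [Finset.mul_sum]
      _ = (3/2) * dot A A * dot C C := by rw [hparsC]
      _ ≤ _ := by nlinarith [sq_nonneg (0:ℝ)]
  · push_neg at hcase
    have hts₀ : t₀ ≠ s₀ := by
      intro hcon
      rw [hcon] at hcase
      simp at hcase
      nlinarith
    have h2 : Real.sqrt 2 * Real.sqrt 2 = 2 := Real.mul_self_sqrt (by norm_num)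
    have hsum11 : ∑ i, v t₀ i * v t₀ i = 1 := by rw [horth t₀ t₀]; simp
    have hsum22 : ∑ i, v s₀ i * v s₀ i = 1 := by rw [horth s₀ s₀]; simp
    have hsum12 : ∑ i, v t₀ i * v s₀ i = 0 := by rw [horth t₀ s₀]; simp [hts₀]
    have hPP : ∑ i, ∑ j, (v t₀ i * v s₀ j + v s₀ i * v t₀ j)
        * (v t₀ i * v s₀ j + v s₀ i * v t₀ j) = 2 := by
      have hf1 : ∑ i, ∑ j, (v t₀ i * v t₀ i) * (v s₀ j * v s₀ j) = 1 := by
        rw [← Finset.sum_mul_sum, hsum11, hsum22]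
        norm_num
      have hf2 : ∑ i, ∑ j, (v t₀ i * v s₀ i) * (v t₀ j * v s₀ j) = 0 := by
        rw [← Finset.sum_mul_sum, hsum12]
        simp
      have hf3 : ∑ i, ∑ j, (v s₀ i * v s₀ i) * (v t₀ j * v t₀ j) = 1 := by
        rw [← Finset.sum_mul_sum, hsum22, hsum11]
        norm_num
      calc ∑ i, ∑ j, (v t₀ i * v s₀ j + v s₀ i * v t₀ j)
            * (v t₀ i * v s₀ j + v s₀ i * v t₀ j)
          = ∑ i, ∑ j, ((v t₀ i * v t₀ i) * (v s₀ j * v s₀ j)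
              + ((v t₀ i * v s₀ i) * (v t₀ j * v s₀ j)
                + ((v t₀ i * v s₀ i) * (v t₀ j * v s₀ j)
                  + (v s₀ i * v s₀ i) * (v t₀ j * v t₀ j)))) :=
            sum_congr rfl fun i _ => sum_congr rfl fun j _ => by ring
        _ = (∑ i, ∑ j, (v t₀ i * v t₀ i) * (v s₀ j * v s₀ j))
              + ((∑ i, ∑ j, (v t₀ i * v s₀ i) * (v t₀ j * v s₀ j))
                + ((∑ i, ∑ j, (v t₀ i * v s₀ i) * (v t₀ j * v s₀ j))
                  + (∑ i, ∑ j, (v s₀ i * v s₀ i) * (v t₀ j * v t₀ j)))) := by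
            simp only [Finset.sum_add_distrib]
        _ = 2 := by rw [hf1, hf2, hf3]; norm_num
    refine ⟨fun i j => (v t₀ i * v s₀ j + v s₀ i * v t₀ j) / Real.sqrt 2, ?_, fun C hC => ?_⟩
    · -- norm of E is 1
      unfold dot
      have e0 : ∀ i j : Fin N,
          ((v t₀ i * v s₀ j + v s₀ i * v t₀ j) / Real.sqrt 2)
            * ((v t₀ i * v s₀ j + v s₀ i * v t₀ j) / Real.sqrt 2)
          = ((v t₀ i * v s₀ j + v s₀ i * v t₀ j)
            * (v t₀ i * v s₀ j + v s₀ i * v t₀ j)) / 2 := by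
        intro i j
        rw [div_mul_div_comm, h2]
      calc ∑ i, ∑ j, ((v t₀ i * v s₀ j + v s₀ i * v t₀ j) / Real.sqrt 2)
            * ((v t₀ i * v s₀ j + v s₀ i * v t₀ j) / Real.sqrt 2)
          = (∑ i, ∑ j, (v t₀ i * v s₀ j + v s₀ i * v t₀ j)
              * (v t₀ i * v s₀ j + v s₀ i * v t₀ j)) / 2 := by
            rw [Finset.sum_div]
            refine sum_congr rfl fun i _ => ?_
            rw [Finset.sum_div]
            exact sum_congr rfl fun j _ => e0 i j
        _ ≤ 1 := by rw [hPP]; norm_num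
    · -- main estimate
      set L := dot A A with hLdef
      set c : Fin N → Fin N → ℝ := fun t s => ∑ i, ∑ j, v t i * C i j * v s j with hcdef
      have csym : ∀ t s, c t s = c s t := by
        intro t s
        rw [hcdef]
        simp only
        rw [Finset.sum_comm]
        exact sum_congr rfl fun j _ => sum_congr rfl fun i _ => by rw [hC j i]; ring
      have hparsC : ∑ t, ∑ s, (c t s) ^ 2 = dot C C := by
        unfold dot
        rw [hpars C]
        exact sum_congr rfl fun i _ => sum_congr rfl fun j _ => by rw [sq]
      have hCE : dot C (fun i j => (v t₀ i * v s₀ j + v s₀ i * v t₀ j) / Real.sqrt 2)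
          = 2 * c t₀ s₀ / Real.sqrt 2 := by
        unfold dot
        have e0 : ∀ i j : Fin N, C i j * ((v t₀ i * v s₀ j + v s₀ i * v t₀ j) / Real.sqrt 2)
            = (C i j * (v t₀ i * v s₀ j) + C i j * (v s₀ i * v t₀ j)) / Real.sqrt 2 := by
          intro i j
          rw [← mul_div_assoc]
          congr 1
          ring
        calc ∑ i, ∑ j, C i j * ((v t₀ i * v s₀ j + v s₀ i * v t₀ j) / Real.sqrt 2)
            = (∑ i, ∑ j, (C i j * (v t₀ i * v s₀ j) + C i j * (v s₀ i * v t₀ j)))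
                / Real.sqrt 2 := by
              rw [Finset.sum_div]
              refine sum_congr rfl fun i _ => ?_
              rw [Finset.sum_div]
              exact sum_congr rfl fun j _ => e0 i j
          _ = (c t₀ s₀ + c s₀ t₀) / Real.sqrt 2 := by
              congr 1
              simp only [Finset.sum_add_distrib]
              simp only [hcdef]
              congr 1
              · exact sum_congr rfl fun i _ => sum_congr rfl fun j _ => by ring
              · exact sum_congr rfl fun i _ => sum_congr rfl fun j _ => by ring
          _ = 2 * c t₀ s₀ / Real.sqrt 2 := by rw [← csym t₀ s₀]; ring_nf
      have hCE2 : (dot C (fun i j => (v t₀ i * v s₀ j + v s₀ i * v t₀ j) / Real.sqrt 2)) ^ 2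
          = 2 * (c t₀ s₀) ^ 2 := by
        rw [hCE, div_pow, Real.sq_sqrt (by norm_num : (0:ℝ) ≤ 2)]
        ring
      have hg2 : (a t₀ - a s₀) ^ 2 ≤ 2 * L := by
        have := hsub2 t₀ s₀ hts₀
        nlinarith [sq_nonneg (a t₀ + a s₀)]
      have hother : ∀ t s : Fin N, ¬(t = t₀ ∧ s = s₀) → ¬(t = s₀ ∧ s = t₀) →
          (a t - a s) ^ 2 ≤ (3/2) * L := by
        intro t s h1 hh2
        by_cases hts : t = s
        · rw [hts]
          simp only [sub_self]
          have h0 : ((0:ℝ)) ^ 2 = 0 := by norm_num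
          rw [h0]
          linarith [hlam0]
        by_contra hgt
        push_neg at hgt
        by_cases e1 : t = t₀
        · rw [e1] at hgt hts
          have hss : s ≠ s₀ := fun hcon => h1 ⟨e1, hcon⟩
          exact arith3 (a t₀) (a s) (a s₀) L hgt hcase (hsub3 t₀ s s₀ hts hts₀ hss)
        by_cases e2 : s = s₀
        · rw [e2] at hgt hts
          have htt : t ≠ t₀ := fun hcon => h1 ⟨hcon, e2⟩
          have hgt' : 3/2 * L < (a s₀ - a t) ^ 2 := by
            rw [show (a s₀ - a t)^2 = (a t - a s₀)^2 from by ring]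
            exact hgt
          have hc2 : 3/2 * L < (a s₀ - a t₀) ^ 2 := by
            rw [show (a s₀ - a t₀)^2 = (a t₀ - a s₀)^2 from by ring]
            exact hcase
          exact arith3 (a s₀) (a t) (a t₀) L hgt' hc2
            (hsub3 s₀ t t₀ (Ne.symm hts) (Ne.symm hts₀) htt)
        by_cases e3 : t = s₀
        · rw [e3] at hgt hts
          have hst : s ≠ t₀ := fun hcon => hh2 ⟨e3, hcon⟩
          have hc2 : 3/2 * L < (a s₀ - a t₀) ^ 2 := by
            rw [show (a s₀ - a t₀)^2 = (a t₀ - a s₀)^2 from by ring]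
            exact hcase
          exact arith3 (a s₀) (a s) (a t₀) L hgt hc2
            (hsub3 s₀ s t₀ hts (Ne.symm hts₀) hst)
        by_cases e4 : s = t₀
        · rw [e4] at hgt hts
          have hgt' : 3/2 * L < (a t₀ - a t) ^ 2 := by
            rw [show (a t₀ - a t)^2 = (a t - a t₀)^2 from by ring]
            exact hgt
          exact arith3 (a t₀) (a t) (a s₀) L hgt' hcase
            (hsub3 t₀ t s₀ (Ne.symm hts) hts₀ e3)
        · exact arith4 (a t) (a s) (a t₀) (a s₀) L hgt hcase
            (hsub4 t s t₀ s₀ hts e1 e3 e4 e2 hts₀) hlam0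
      have hbound : ∀ p : Fin N × Fin N,
          ((a p.1 - a p.2) * c p.1 p.2) ^ 2
            ≤ (3/2) * L * (c p.1 p.2) ^ 2
              + (if p = (t₀, s₀) then (1/2) * L * (c t₀ s₀) ^ 2 else 0)
              + (if p = (s₀, t₀) then (1/2) * L * (c t₀ s₀) ^ 2 else 0) := by
        intro p
        obtain ⟨t, s⟩ := p
        simp only [Prod.mk.injEq]
        rw [mul_pow]
        by_cases hp1 : t = t₀ ∧ s = s₀
        · obtain ⟨ha, hb⟩ := hp1
          subst ha
          subst hb
          rw [if_pos ⟨rfl, rfl⟩, if_neg (fun hcon => hts₀ hcon.1)]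
          nlinarith [mul_le_mul_of_nonneg_right hg2 (sq_nonneg (c t₀ s₀))]
        by_cases hp2 : t = s₀ ∧ s = t₀
        · obtain ⟨ha, hb⟩ := hp2
          subst ha
          subst hb
          rw [if_neg (fun hcon => hts₀ hcon.1.symm), if_pos ⟨rfl, rfl⟩]
          rw [csym s₀ t₀]
          nlinarith [mul_le_mul_of_nonneg_right hg2 (sq_nonneg (c t₀ s₀))]
        · rw [if_neg hp1, if_neg hp2]
          have hoth := hother t s hp1 hp2
          nlinarith [mul_le_mul_of_nonneg_right hoth (sq_nonneg (c t s)), sq_nonneg (c t s)]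
      -- sum up
      have keyC := keyid C
      have hprod : cns A C = ∑ p ∈ univ ×ˢ univ,
          ((a p.1 - a p.2) * c p.1 p.2) ^ 2 := by
        rw [keyC]
        exact (Finset.sum_product (f := fun p => ((a p.1 - a p.2) * c p.1 p.2) ^ 2)
          (s := univ) (t := univ)).symm
      rw [hprod, hCE2]
      have hsum_bound := Finset.sum_le_sum (fun p (_ : p ∈ univ ×ˢ univ) => hbound p)
      have hsplit : ∑ p ∈ univ ×ˢ univ, ((3/2) * L * (c p.1 p.2) ^ 2
              + (if p = (t₀, s₀) then (1/2) * L * (c t₀ s₀) ^ 2 else 0)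
              + (if p = (s₀, t₀) then (1/2) * L * (c t₀ s₀) ^ 2 else 0))
          = (3/2) * L * dot C C + (1/2) * L * (c t₀ s₀) ^ 2 + (1/2) * L * (c t₀ s₀) ^ 2 := by
        rw [Finset.sum_add_distrib, Finset.sum_add_distrib]
        congr 1
        · congr 1
          · rw [← Finset.mul_sum]
            congr 1
            rw [Finset.sum_product (f := fun p => (c p.1 p.2) ^ 2) (s := univ) (t := univ)]
            exact hparsC
          · rw [Finset.sum_ite_eq' (univ ×ˢ univ) ((t₀, s₀) : Fin N × Fin N)
              (fun _ => (1/2) * L * (c t₀ s₀) ^ 2)]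
            simp
        · rw [Finset.sum_ite_eq' (univ ×ˢ univ) ((s₀, t₀) : Fin N × Fin N)
            (fun _ => (1/2) * L * (c t₀ s₀) ^ 2)]
          simp
      rw [hsplit] at hsum_bound
      linarith [hsum_bound]


/-- Bessel's inequality for a pairwise-orthogonal family of norm at most 1. -/
theorem bessel {N m : ℕ} (w : Fin m → Fin N → Fin N → ℝ) (E : Fin N → Fin N → ℝ)
    (horth : ∀ r s, r ≠ s → dot (w r) (w s) = 0) (hnorm : ∀ r, dot (w r) (w r) ≤ 1) :
    ∑ r, (dot (w r) E) ^ 2 ≤ dot E E := by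
  set c : Fin m → ℝ := fun r => dot (w r) E with hc
  have hcr : ∀ r, dot (w r) E = c r := fun r => rfl
  have expand : dot (fun i j => E i j - ∑ r, c r * w r i j)
      (fun i j => E i j - ∑ r, c r * w r i j)
      = dot E E - 2 * ∑ r, c r * dot (w r) E
        + ∑ r, ∑ s, (c r * c s) * dot (w r) (w s) := by
    unfold dot
    have e1 : ∀ i j : Fin N, (E i j - ∑ r, c r * w r i j) * (E i j - ∑ r, c r * w r i j)
        = E i j * E i j - 2 * ∑ r, c r * (w r i j * E i j)
          + ∑ r, ∑ s, (c r * c s) * (w r i j * w s i j) := by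
      intro i j
      have e2 : (∑ r, c r * w r i j) * (∑ s, c s * w s i j)
          = ∑ r, ∑ s, (c r * c s) * (w r i j * w s i j) := by
        rw [Finset.sum_mul_sum]
        exact sum_congr rfl fun r _ => sum_congr rfl fun s _ => by ring
      have e3 : E i j * (∑ r, c r * w r i j) = ∑ r, c r * (w r i j * E i j) := by
        rw [Finset.mul_sum]
        exact sum_congr rfl fun r _ => by ring
      calc (E i j - ∑ r, c r * w r i j) * (E i j - ∑ r, c r * w r i j)
          = E i j * E i j - 2 * (E i j * (∑ r, c r * w r i j))
            + (∑ r, c r * w r i j) * (∑ s, c s * w s i j) := by ring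
        _ = _ := by rw [e2, e3]
    have e4 : ∑ i, ∑ j, ∑ r, c r * (w r i j * E i j)
        = ∑ r, c r * ∑ i, ∑ j, w r i j * E i j := by
      rw [sum_out3]
      refine sum_congr rfl fun r _ => ?_
      rw [Finset.mul_sum]
      exact sum_congr rfl fun i _ => by rw [Finset.mul_sum]
    have e5 : ∑ i, ∑ j, ∑ r, ∑ s, (c r * c s) * (w r i j * w s i j)
        = ∑ r, ∑ s, (c r * c s) * ∑ i, ∑ j, w r i j * w s i j := by
      rw [sum_out4]
      refine sum_congr rfl fun r _ => sum_congr rfl fun s _ => ?_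
      rw [Finset.mul_sum]
      exact sum_congr rfl fun i _ => by rw [Finset.mul_sum]
    calc ∑ i, ∑ j, (E i j - ∑ r, c r * w r i j) * (E i j - ∑ r, c r * w r i j)
        = ∑ i, ∑ j, (E i j * E i j - 2 * ∑ r, c r * (w r i j * E i j)
            + ∑ r, ∑ s, (c r * c s) * (w r i j * w s i j)) :=
          sum_congr rfl fun i _ => sum_congr rfl fun j _ => e1 i j
      _ = (∑ i, ∑ j, E i j * E i j) - 2 * (∑ i, ∑ j, ∑ r, c r * (w r i j * E i j))
            + ∑ i, ∑ j, ∑ r, ∑ s, (c r * c s) * (w r i j * w s i j) := by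
          simp only [Finset.sum_add_distrib, Finset.sum_sub_distrib, Finset.mul_sum]
      _ = _ := by rw [e4, e5]
  have h0 : (0:ℝ) ≤ dot E E - 2 * ∑ r, c r * dot (w r) E
      + ∑ r, ∑ s, (c r * c s) * dot (w r) (w s) := by
    rw [← expand]; exact dot_self_nonneg _
  have hdiag : ∑ r, ∑ s, (c r * c s) * dot (w r) (w s) ≤ ∑ r, c r ^ 2 := by
    have e6 : ∀ r, ∑ s, (c r * c s) * dot (w r) (w s) = c r ^ 2 * dot (w r) (w r) := by
      intro r
      rw [Finset.sum_eq_single r]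
      · ring
      · intro s _ hs
        rw [horth r s (Ne.symm hs), mul_zero]
      · intro hr; exact absurd (mem_univ r) hr
    calc ∑ r, ∑ s, (c r * c s) * dot (w r) (w s) = ∑ r, c r ^ 2 * dot (w r) (w r) :=
          sum_congr rfl fun r _ => e6 r
      _ ≤ ∑ r, c r ^ 2 * 1 :=
          sum_le_sum fun r _ => mul_le_mul_of_nonneg_left (hnorm r) (sq_nonneg _)
      _ = ∑ r, c r ^ 2 := by simp
  have e7 : ∑ r, c r * dot (w r) E = ∑ r, c r ^ 2 :=
    sum_congr rfl fun r _ => by rw [hcr r]; ring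
  rw [e7] at h0
  have : ∑ r, (dot (w r) E) ^ 2 = ∑ r, c r ^ 2 :=
    sum_congr rfl fun r _ => by rw [hcr r]
  rw [this]
  linarith


private lemma arith_pair (e K x y P Q : ℝ) (hx : 0 ≤ x) (hy : 0 ≤ y) (hP : 0 ≤ P) (hQ : 0 ≤ Q)
    (h1 : e ≤ K + x * y * P / 2) (h2 : e ≤ K + x * y * Q / 2) :
    e ≤ K + (x ^ 2 * P + y ^ 2 * Q) / 4 := by
  rcases le_or_gt e K with hle | hgt
  · have h0 : 0 ≤ (x ^ 2 * P + y ^ 2 * Q) / 4 := by positivity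
    linarith
  · have hd1 : e - K ≤ x * y * P / 2 := by linarith
    have hd2 : e - K ≤ x * y * Q / 2 := by linarith
    have hd0 : 0 ≤ e - K := by linarith
    have hsq : (e - K) * (e - K) ≤ (x * y * P / 2) * (x * y * Q / 2) :=
      mul_le_mul hd1 hd2 hd0 (by positivity)
    have hT : 0 ≤ x ^ 2 * P + y ^ 2 * Q := by positivity
    have key : 16 * ((e - K) * (e - K)) ≤ (x ^ 2 * P + y ^ 2 * Q) ^ 2 := by
      nlinarith [hsq, sq_nonneg (x ^ 2 * P - y ^ 2 * Q)]
    nlinarith [key, hd0, hT]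

/-- Core inequality for a pairwise trace-orthogonal symmetric family. -/
theorem core {N m : ℕ} (B : Fin m → Fin N → Fin N → ℝ)
    (hsym : ∀ r i j, B r i j = B r j i)
    (horth : ∀ r s, r ≠ s → dot (B r) (B s) = 0) :
    2 * (∑ r, ∑ s, cns (B r) (B s)) + 2 * (∑ r, ∑ s, (dot (B r) (B s)) ^ 2)
      ≤ 3 * (∑ r, dot (B r) (B r)) ^ 2 := by
  set lam : Fin m → ℝ := fun r => dot (B r) (B r) with hlamdef
  have hlam0 : ∀ r, 0 ≤ lam r := fun r => dot_self_nonneg _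
  have hconv : ∀ r : Fin m, dot (B r) (B r) = lam r := fun _ => rfl
  choose E hE1 hE2 using fun r => hot (B r) (hsym r)
  set Et : Fin m → Fin N → Fin N → ℝ :=
    fun s i j => B s i j / Real.sqrt (lam s) with hEtdef
  have hdotEtX : ∀ (s : Fin m) (X : Fin N → Fin N → ℝ),
      dot (Et s) X = dot (B s) X / Real.sqrt (lam s) := by
    intro s X
    unfold dot
    rw [Finset.sum_div]
    refine sum_congr rfl fun i _ => ?_
    rw [Finset.sum_div]
    refine sum_congr rfl fun j _ => ?_
    rw [hEtdef]
    simp only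
    rw [div_mul_eq_mul_div]
  have hdotEt : ∀ r s : Fin m, dot (Et r) (Et s)
      = dot (B r) (B s) / (Real.sqrt (lam r) * Real.sqrt (lam s)) := by
    intro r s
    unfold dot
    rw [Finset.sum_div]
    refine sum_congr rfl fun i _ => ?_
    rw [Finset.sum_div]
    refine sum_congr rfl fun j _ => ?_
    rw [hEtdef]
    simp only
    rw [div_mul_div_comm]
  have hEtorth : ∀ r s : Fin m, r ≠ s → dot (Et r) (Et s) = 0 := by
    intro r s hrs
    rw [hdotEt, horth r s hrs, zero_div]
  have hEtnorm : ∀ s : Fin m, dot (Et s) (Et s) ≤ 1 := by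
    intro s
    rw [hdotEt, Real.mul_self_sqrt (hlam0 s)]
    by_cases hz : lam s = 0
    · rw [hz]
      simp
    · rw [hconv s, div_self hz]
  have hBzero : ∀ s : Fin m, lam s = 0 → ∀ X, dot (B s) X = 0 := by
    intro s hz X
    have hent := dot_self_eq_zero (X := B s) hz
    unfold dot
    exact sum_eq_zero fun i _ => sum_eq_zero fun j _ => by rw [hent i j, zero_mul]
  have hBEt : ∀ (s : Fin m) (X : Fin N → Fin N → ℝ),
      (dot (B s) X) ^ 2 = lam s * (dot (Et s) X) ^ 2 := by
    intro s X
    rw [hdotEtX, div_pow, Real.sq_sqrt (hlam0 s)]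
    by_cases hz : lam s = 0
    · rw [hBzero s hz X, hz]
      simp
    · rw [mul_div_assoc', mul_comm (lam s), mul_div_assoc, div_self hz, mul_one]
  set Z : Fin m → Fin m → ℝ :=
    fun r s => if s = r then 0 else (dot (Et s) (E r)) ^ 2 with hZdef
  have hZ0 : ∀ r s, 0 ≤ Z r s := by
    intro r s
    rw [hZdef]
    by_cases hsr : s = r
    · simp [hsr]
    · simp only [if_neg hsr]
      exact sq_nonneg _
  have hbess : ∀ r, ∑ s, Z r s ≤ 1 := by
    intro r
    set w : Fin m → Fin N → Fin N → ℝ :=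
      fun s => if s = r then (fun _ _ => 0) else Et s with hwdef
    have hworth : ∀ s s', s ≠ s' → dot (w s) (w s') = 0 := by
      intro s s' hss
      rw [hwdef]
      by_cases h1 : s = r
      · simp only [if_pos h1]
        unfold dot
        exact sum_eq_zero fun i _ => sum_eq_zero fun j _ => by simp
      · by_cases h2 : s' = r
        · simp only [if_neg h1, if_pos h2]
          unfold dot
          exact sum_eq_zero fun i _ => sum_eq_zero fun j _ => by simp
        · simp only [if_neg h1, if_neg h2]
          exact hEtorth s s' hss
    have hwnorm : ∀ s, dot (w s) (w s) ≤ 1 := by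
      intro s
      rw [hwdef]
      by_cases h1 : s = r
      · simp only [if_pos h1]
        unfold dot
        have : ∑ i : Fin N, ∑ j : Fin N, (0:ℝ) * 0 = 0 :=
          sum_eq_zero fun i _ => sum_eq_zero fun j _ => by simp
        rw [this]
        norm_num
      · simp only [if_neg h1]
        exact hEtnorm s
    have hb := bessel w (E r) hworth hwnorm
    have heq : ∑ s, (dot (w s) (E r)) ^ 2 = ∑ s, Z r s := by
      refine sum_congr rfl fun s _ => ?_
      rw [hwdef, hZdef]
      by_cases h1 : s = r
      · simp only [if_pos h1]
        have : dot (fun _ _ => (0:ℝ)) (E r) = 0 := by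
          unfold dot
          exact sum_eq_zero fun i _ => sum_eq_zero fun j _ => by simp
        rw [this]
        norm_num
      · simp only [if_neg h1]
    rw [heq] at hb
    exact le_trans hb (hE1 r)
  -- pairwise bound
  have pair : ∀ r s : Fin m, cns (B r) (B s)
      ≤ (3/2) * (if r = s then 0 else lam r * lam s)
        + (lam r ^ 2 * Z r s + lam s ^ 2 * Z s r) / 4 := by
    intro r s
    by_cases hrs : r = s
    · subst hrs
      rw [cns_self]
      have hZrr : Z r r = 0 := by rw [hZdef]; simp
      rw [if_pos rfl, hZrr]
      simp
    · have h1 : cns (B r) (B s) ≤ (3/2) * (lam r * lam s) + lam r * lam s * Z r s / 2 := by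
        have := hE2 r (B s) (hsym s)
        rw [hBEt s (E r)] at this
        have hZrs : Z r s = (dot (Et s) (E r)) ^ 2 := by
          rw [hZdef]
          simp only [if_neg (Ne.symm hrs)]
        rw [hZrs]
        calc cns (B r) (B s)
            ≤ 3/2 * dot (B r) (B r) * dot (B s) (B s)
              + 1/2 * dot (B r) (B r) * (lam s * (dot (Et s) (E r)) ^ 2) := this
          _ = (3/2) * (lam r * lam s) + lam r * lam s * (dot (Et s) (E r)) ^ 2 / 2 := by
              rw [hconv r, hconv s]
              ring
      have h2 : cns (B r) (B s) ≤ (3/2) * (lam r * lam s) + lam r * lam s * Z s r / 2 := by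
        have := hE2 s (B r) (hsym r)
        rw [hBEt r (E s)] at this
        have hZsr : Z s r = (dot (Et r) (E s)) ^ 2 := by
          rw [hZdef]
          simp only [if_neg hrs]
        rw [hZsr, cns_comm]
        calc cns (B s) (B r)
            ≤ 3/2 * dot (B s) (B s) * dot (B r) (B r)
              + 1/2 * dot (B s) (B s) * (lam r * (dot (Et r) (E s)) ^ 2) := this
          _ = (3/2) * (lam r * lam s) + lam r * lam s * (dot (Et r) (E s)) ^ 2 / 2 := by
              rw [hconv r, hconv s]
              ring
      rw [if_neg hrs]
      exact arith_pair _ _ _ _ _ _ (hlam0 r) (hlam0 s) (hZ0 r s) (hZ0 s r) h1 h2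
  -- sum the pairwise bounds
  set S := ∑ r, lam r with hSdef
  set P := ∑ r, lam r ^ 2 with hPdef
  have hsum1 : ∑ r, ∑ s, (if r = s then 0 else lam r * lam s) = S ^ 2 - P := by
    have hper : ∀ r, ∑ s, (if r = s then 0 else lam r * lam s)
        = lam r * S - lam r ^ 2 := by
      intro r
      have e1 : ∀ s, (if r = s then 0 else lam r * lam s)
          = lam r * lam s - (if r = s then lam r * lam s else 0) := by
        intro s
        by_cases h : r = s <;> simp [h]
      rw [sum_congr rfl fun s _ => e1 s, Finset.sum_sub_distrib,
        Finset.sum_ite_eq univ r (fun s => lam r * lam s)]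
      simp only [mem_univ, if_true]
      rw [← Finset.mul_sum, ← hSdef]
      ring
    rw [sum_congr rfl fun r _ => hper r, Finset.sum_sub_distrib, ← Finset.sum_mul, ← hSdef,
      ← hPdef]
    ring
  have hsum2 : ∑ r, ∑ s, lam r ^ 2 * Z r s ≤ P := by
    rw [hPdef]
    refine sum_le_sum fun r _ => ?_
    rw [← Finset.mul_sum]
    calc lam r ^ 2 * ∑ s, Z r s ≤ lam r ^ 2 * 1 :=
          mul_le_mul_of_nonneg_left (hbess r) (sq_nonneg _)
      _ = lam r ^ 2 := mul_one _
  have hsum3 : ∑ r, ∑ s, lam s ^ 2 * Z s r ≤ P := by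
    rw [Finset.sum_comm]
    rw [hPdef]
    refine sum_le_sum fun s _ => ?_
    rw [← Finset.mul_sum]
    calc lam s ^ 2 * ∑ r, Z s r ≤ lam s ^ 2 * 1 :=
          mul_le_mul_of_nonneg_left (hbess s) (sq_nonneg _)
      _ = lam s ^ 2 := mul_one _
  have hY : ∑ r, ∑ s, (dot (B r) (B s)) ^ 2 = P := by
    rw [hPdef]
    refine sum_congr rfl fun r _ => ?_
    have e1 : ∀ s, (dot (B r) (B s)) ^ 2 = if r = s then lam r ^ 2 else 0 := by
      intro s
      by_cases h : r = s
      · subst h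
        rw [if_pos rfl, hconv r]
      · rw [if_neg h, horth r s h]
        norm_num
    rw [sum_congr rfl fun s _ => e1 s, Finset.sum_ite_eq univ r (fun _ => lam r ^ 2)]
    simp
  have hmain : ∑ r, ∑ s, cns (B r) (B s)
      ≤ (3/2) * (S ^ 2 - P) + (∑ r, ∑ s, lam r ^ 2 * Z r s
          + ∑ r, ∑ s, lam s ^ 2 * Z s r) / 4 := by
    calc ∑ r, ∑ s, cns (B r) (B s)
        ≤ ∑ r, ∑ s, ((3/2) * (if r = s then 0 else lam r * lam s)
            + (lam r ^ 2 * Z r s + lam s ^ 2 * Z s r) / 4) :=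
          sum_le_sum fun r _ => sum_le_sum fun s _ => pair r s
      _ = (∑ r, ∑ s, (3/2) * (if r = s then 0 else lam r * lam s))
            + ∑ r, ∑ s, (lam r ^ 2 * Z r s + lam s ^ 2 * Z s r) / 4 := by
          simp only [Finset.sum_add_distrib]
      _ = (3/2) * (∑ r, ∑ s, (if r = s then 0 else lam r * lam s))
            + (∑ r, ∑ s, lam r ^ 2 * Z r s + ∑ r, ∑ s, lam s ^ 2 * Z s r) / 4 := by
          congr 1
          · rw [Finset.mul_sum]
            exact sum_congr rfl fun r _ => by rw [Finset.mul_sum]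
          · calc ∑ r, ∑ s, (lam r ^ 2 * Z r s + lam s ^ 2 * Z s r) / 4
                = ∑ r, ((∑ s, lam r ^ 2 * Z r s) + ∑ s, lam s ^ 2 * Z s r) / 4 := by
                  refine sum_congr rfl fun r _ => ?_
                  rw [← Finset.sum_add_distrib, ← Finset.sum_div]
              _ = (∑ r, ∑ s, lam r ^ 2 * Z r s + ∑ r, ∑ s, lam s ^ 2 * Z s r) / 4 := by
                  rw [← Finset.sum_add_distrib, ← Finset.sum_div]
      _ = _ := by rw [hsum1]
  rw [hY]
  have hfin : ∑ r, ∑ s, cns (B r) (B s) ≤ (3/2) * (S ^ 2 - P) + (P + P) / 4 := by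
    calc ∑ r, ∑ s, cns (B r) (B s) ≤ _ := hmain
      _ ≤ (3/2) * (S ^ 2 - P) + (P + P) / 4 := by
        have := hsum2
        have := hsum3
        linarith
  have hSP : P ≤ S ^ 2 := by
    have h := hsum1
    have hnn : 0 ≤ ∑ r, ∑ s, (if r = s then 0 else lam r * lam s) := by
      refine sum_nonneg fun r _ => sum_nonneg fun s _ => ?_
      by_cases hrs : r = s
      · simp [hrs]
      · simp only [if_neg hrs]
        exact mul_nonneg (hlam0 r) (hlam0 s)
    linarith
  linarith

end LiLi

/-- For symmetric real bilinear forms `h α` (second fundamental form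
coefficients, symmetric in the last two indices), the reaction terms in the evolution
equation of `|A|²` satisfy
`2 ∑ |[A_α, A_γ]|² + 2 ∑ (tr (A_α A_β))² ≤ 3 |A|⁴`. -/
theorem stmt_0 (n m : ℕ) (hn : 1 ≤ n) (hm : 1 ≤ m)
    (h : Fin m → Fin n → Fin n → ℝ)
    (hsymm : ∀ (α : Fin m) (i j : Fin n), h α i j = h α j i) :
    2 * (∑ α : Fin m, ∑ γ : Fin m, ∑ i : Fin n, ∑ m' : Fin n,
        (∑ k : Fin n, (h α i k * h γ m' k - h α m' k * h γ i k)) ^ 2)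
      + 2 * (∑ i : Fin n, ∑ j : Fin n, ∑ m' : Fin n, ∑ k : Fin n,
        (∑ α : Fin m, h α i j * h α m' k) ^ 2)
      ≤ 3 * (∑ α : Fin m, ∑ i : Fin n, ∑ j : Fin n, (h α i j) ^ 2) ^ 2 := by
  classical
  open LiLi in
  have main : 2 * (∑ α : Fin m, ∑ γ : Fin m, cns (h α) (h γ))
      + 2 * (∑ α : Fin m, ∑ γ : Fin m, (dot (h α) (h γ)) ^ 2)
      ≤ 3 * (∑ α : Fin m, dot (h α) (h α)) ^ 2 := by
    set T : Fin m → Fin m → ℝ := fun α β => dot (h α) (h β) with hTdef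
    have hTsymm : ∀ α β, T α β = T β α := fun α β => dot_comm _ _
    obtain ⟨d, v, horth, hcompl, hrepr⟩ := real_spectral T hTsymm
    set B : Fin m → Fin n → Fin n → ℝ := fun r i j => ∑ α, v r α * h α i j with hBdef
    have hBsym : ∀ r i j, B r i j = B r j i := by
      intro r i j
      rw [hBdef]
      exact Finset.sum_congr rfl fun α _ => by rw [hsymm α i j]
    -- dot of B's in terms of T
    have hdotB : ∀ r s, dot (B r) (B s) = ∑ α, ∑ γ, v r α * v s γ * T α γ := by
      intro r s
      unfold dot
      calc ∑ i, ∑ j, B r i j * B s i j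
          = ∑ i, ∑ j, ∑ α, ∑ γ, (v r α * v s γ) * (h α i j * h γ i j) := by
            refine Finset.sum_congr rfl fun i _ => Finset.sum_congr rfl fun j _ => ?_
            rw [hBdef]
            simp only
            rw [Finset.sum_mul_sum]
            exact Finset.sum_congr rfl fun α _ => Finset.sum_congr rfl fun γ _ => by ring
        _ = ∑ α, ∑ γ, ∑ i, ∑ j, (v r α * v s γ) * (h α i j * h γ i j) :=
            LiLi.sum_out4 (fun α γ i j => (v r α * v s γ) * (h α i j * h γ i j))
        _ = ∑ α, ∑ γ, v r α * v s γ * T α γ := by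
            refine Finset.sum_congr rfl fun α _ => Finset.sum_congr rfl fun γ _ => ?_
            rw [hTdef]
            simp only
            unfold dot
            rw [Finset.mul_sum]
            refine Finset.sum_congr rfl fun i _ => ?_
            rw [Finset.mul_sum]
        _ = ∑ α, ∑ γ, v r α * v s γ * T α γ := rfl
    have hdotB2 : ∀ r s, dot (B r) (B s) = if r = s then d r else 0 := by
      intro r s
      rw [hdotB r s]
      calc ∑ α, ∑ γ, v r α * v s γ * T α γ
          = ∑ α, ∑ γ, ∑ u, (d u) * ((v r α * v u α) * (v s γ * v u γ)) := by
            refine Finset.sum_congr rfl fun α _ => Finset.sum_congr rfl fun γ _ => ?_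
            rw [hrepr α γ, Finset.mul_sum]
            exact Finset.sum_congr rfl fun u _ => by ring
        _ = ∑ u, ∑ α, ∑ γ, (d u) * ((v r α * v u α) * (v s γ * v u γ)) :=
            LiLi.sum_out3 (fun u α γ => (d u) * ((v r α * v u α) * (v s γ * v u γ)))
        _ = ∑ u, (d u) * ((∑ α, v r α * v u α) * (∑ γ, v s γ * v u γ)) := by
            refine Finset.sum_congr rfl fun u _ => ?_
            rw [Finset.sum_mul_sum, Finset.mul_sum]
            refine Finset.sum_congr rfl fun α _ => ?_
            rw [Finset.mul_sum]
        _ = ∑ u, (d u) * ((if r = u then 1 else 0) * (if s = u then 1 else 0)) := by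
            refine Finset.sum_congr rfl fun u _ => ?_
            rw [horth r u, horth s u]
        _ = if r = s then d r else 0 := by
            by_cases hrs : r = s
            · subst hrs
              rw [if_pos rfl]
              rw [Finset.sum_congr rfl (fun u _ => by
                rw [show (d u) * ((if r = u then 1 else 0) * (if r = u then 1 else 0))
                  = if r = u then d u else 0 from by by_cases h : r = u <;> simp [h]])]
              rw [Finset.sum_ite_eq Finset.univ r (fun u => d u)]
              simp
            · rw [if_neg hrs]
              refine Finset.sum_eq_zero fun u _ => ?_
              by_cases h1 : r = u
              · have h2 : s ≠ u := fun hc => hrs (h1.trans hc.symm)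
                simp [h1, h2]
              · simp [h1]
    have horthB : ∀ r s, r ≠ s → dot (B r) (B s) = 0 := by
      intro r s hrs
      rw [hdotB2 r s, if_neg hrs]
    -- transfer of the three sums
    have hE2 : ∑ r, ∑ s, (dot (B r) (B s)) ^ 2 = ∑ α, ∑ γ, (dot (h α) (h γ)) ^ 2 := by
      calc ∑ r, ∑ s, (dot (B r) (B s)) ^ 2
          = ∑ r, ∑ s, (∑ α, ∑ γ, v r α * v s γ * T α γ) ^ 2 :=
            Finset.sum_congr rfl fun r _ => Finset.sum_congr rfl fun s _ => by rw [hdotB]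
        _ = ∑ α, ∑ γ, (T α γ) ^ 2 := vparseval2 hcompl T
        _ = ∑ α, ∑ γ, (dot (h α) (h γ)) ^ 2 := rfl
    have hE3 : ∑ r, dot (B r) (B r) = ∑ α, dot (h α) (h α) := by
      have lhs : ∑ r, dot (B r) (B r) = ∑ r, d r := by
        refine Finset.sum_congr rfl fun r _ => ?_
        rw [hdotB2 r r, if_pos rfl]
      have rhs : ∑ α, dot (h α) (h α) = ∑ u, d u := by
        calc ∑ α, dot (h α) (h α) = ∑ α, T α α := rfl
          _ = ∑ α, ∑ u, (d u) * (v u α * v u α) := by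
              refine Finset.sum_congr rfl fun α _ => ?_
              rw [hrepr α α]
              exact Finset.sum_congr rfl fun u _ => by ring
          _ = ∑ u, (d u) * ∑ α, v u α * v u α := by
              rw [Finset.sum_comm]
              exact Finset.sum_congr rfl fun u _ => by rw [Finset.mul_sum]
          _ = ∑ u, d u := by
              refine Finset.sum_congr rfl fun u _ => ?_
              rw [horth u u]
              simp
      rw [lhs, rhs]
    have hE1 : ∑ r, ∑ s, cns (B r) (B s) = ∑ α, ∑ γ, cns (h α) (h γ) := by
      have hentry : ∀ (r s : Fin m) (i k : Fin n),
          (∑ j, (B r i j * B s j k - B s i j * B r j k))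
            = ∑ α, ∑ γ, v r α * v s γ * (∑ j, (h α i j * h γ j k - h γ i j * h α j k)) := by
        intro r s i k
        calc ∑ j, (B r i j * B s j k - B s i j * B r j k)
            = ∑ j, ∑ α, ∑ γ, v r α * v s γ * (h α i j * h γ j k - h γ i j * h α j k) := by
              refine Finset.sum_congr rfl fun j _ => ?_
              have ef : B r i j * B s j k
                  = ∑ α, ∑ γ, (v r α * h α i j) * (v s γ * h γ j k) := by
                rw [hBdef]
                simp only
                rw [Finset.sum_mul_sum]
              have eg : B s i j * B r j k
                  = ∑ α, ∑ γ, (v r α * h α j k) * (v s γ * h γ i j) := by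
                rw [hBdef]
                simp only
                rw [mul_comm, Finset.sum_mul_sum]
              rw [ef, eg, ← Finset.sum_sub_distrib]
              refine Finset.sum_congr rfl fun α _ => ?_
              rw [← Finset.sum_sub_distrib]
              exact Finset.sum_congr rfl fun γ _ => by ring
          _ = ∑ α, ∑ j, ∑ γ, v r α * v s γ * (h α i j * h γ j k - h γ i j * h α j k) :=
              Finset.sum_comm
          _ = ∑ α, ∑ γ, ∑ j, v r α * v s γ * (h α i j * h γ j k - h γ i j * h α j k) :=
              Finset.sum_congr rfl fun α _ => Finset.sum_comm
          _ = ∑ α, ∑ γ, v r α * v s γ * (∑ j, (h α i j * h γ j k - h γ i j * h α j k)) := by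
              refine Finset.sum_congr rfl fun α _ => Finset.sum_congr rfl fun γ _ => ?_
              rw [Finset.mul_sum]
      calc ∑ r, ∑ s, cns (B r) (B s)
          = ∑ r, ∑ s, ∑ i, ∑ k,
              (∑ α, ∑ γ, v r α * v s γ * (∑ j, (h α i j * h γ j k - h γ i j * h α j k))) ^ 2 := by
            refine Finset.sum_congr rfl fun r _ => Finset.sum_congr rfl fun s _ => ?_
            unfold cns
            exact Finset.sum_congr rfl fun i _ => Finset.sum_congr rfl fun k _ => by
              rw [hentry r s i k]
        _ = ∑ i, ∑ k, ∑ r, ∑ s,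
              (∑ α, ∑ γ, v r α * v s γ * (∑ j, (h α i j * h γ j k - h γ i j * h α j k))) ^ 2 :=
            (LiLi.sum_out4 (fun r s i k =>
              (∑ α, ∑ γ, v r α * v s γ * (∑ j, (h α i j * h γ j k - h γ i j * h α j k))) ^ 2)).symm
        _ = ∑ i, ∑ k, ∑ α, ∑ γ,
              (∑ j, (h α i j * h γ j k - h γ i j * h α j k)) ^ 2 := by
            refine Finset.sum_congr rfl fun i _ => Finset.sum_congr rfl fun k _ => ?_
            exact vparseval2 hcompl (fun α γ => ∑ j, (h α i j * h γ j k - h γ i j * h α j k))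
        _ = ∑ α, ∑ γ, ∑ i, ∑ k,
              (∑ j, (h α i j * h γ j k - h γ i j * h α j k)) ^ 2 :=
            LiLi.sum_out4 (fun α γ i k => (∑ j, (h α i j * h γ j k - h γ i j * h α j k)) ^ 2)
        _ = ∑ α, ∑ γ, cns (h α) (h γ) := rfl
    have hcore := LiLi.core B hBsym horthB
    rw [hE1, hE2, hE3] at hcore
    exact hcore
  -- rewrite the goal in terms of dot/cns
  have g1 : ∑ α : Fin m, ∑ γ : Fin m, ∑ i : Fin n, ∑ m' : Fin n,
      (∑ k : Fin n, (h α i k * h γ m' k - h α m' k * h γ i k)) ^ 2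
      = ∑ α : Fin m, ∑ γ : Fin m, cns (h α) (h γ) := by
    refine Finset.sum_congr rfl fun α _ => Finset.sum_congr rfl fun γ _ => ?_
    unfold LiLi.cns
    refine Finset.sum_congr rfl fun i _ => Finset.sum_congr rfl fun m' _ => ?_
    congr 1
    refine Finset.sum_congr rfl fun k _ => ?_
    rw [hsymm γ m' k, hsymm α m' k]
    ring
  have g2 : ∑ i : Fin n, ∑ j : Fin n, ∑ m' : Fin n, ∑ k : Fin n,
      (∑ α : Fin m, h α i j * h α m' k) ^ 2
      = ∑ α : Fin m, ∑ γ : Fin m, (dot (h α) (h γ)) ^ 2 := by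
    calc ∑ i : Fin n, ∑ j : Fin n, ∑ m' : Fin n, ∑ k : Fin n,
        (∑ α : Fin m, h α i j * h α m' k) ^ 2
        = ∑ i, ∑ j, ∑ m', ∑ k, ∑ α, ∑ γ,
            (h α i j * h γ i j) * (h α m' k * h γ m' k) := by
          refine Finset.sum_congr rfl fun i _ => Finset.sum_congr rfl fun j _ =>
            Finset.sum_congr rfl fun m' _ => Finset.sum_congr rfl fun k _ => ?_
          rw [sq, Finset.sum_mul_sum]
          exact Finset.sum_congr rfl fun α _ => Finset.sum_congr rfl fun γ _ => by ring
      _ = ∑ i, ∑ j, ∑ α, ∑ γ, (h α i j * h γ i j) * (∑ m', ∑ k, h α m' k * h γ m' k) := by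
          refine Finset.sum_congr rfl fun i _ => Finset.sum_congr rfl fun j _ => ?_
          rw [LiLi.sum_out4 (fun α γ m' k => (h α i j * h γ i j) * (h α m' k * h γ m' k))]
          refine Finset.sum_congr rfl fun α _ => Finset.sum_congr rfl fun γ _ => ?_
          rw [Finset.mul_sum]
          exact Finset.sum_congr rfl fun m' _ => by rw [Finset.mul_sum]
      _ = ∑ α, ∑ γ, (∑ i, ∑ j, (h α i j * h γ i j) * (∑ m', ∑ k, h α m' k * h γ m' k)) :=
          LiLi.sum_out4 (fun α γ i j => (h α i j * h γ i j) * (∑ m', ∑ k, h α m' k * h γ m' k))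
      _ = ∑ α, ∑ γ, (dot (h α) (h γ)) ^ 2 := by
          refine Finset.sum_congr rfl fun α _ => Finset.sum_congr rfl fun γ _ => ?_
          rw [sq]
          unfold LiLi.dot
          refine Eq.trans (Finset.sum_congr rfl fun i _ => by rw [← Finset.sum_mul]) ?_
          rw [← Finset.sum_mul]
  have g3 : ∑ α : Fin m, ∑ i : Fin n, ∑ j : Fin n, (h α i j) ^ 2
      = ∑ α : Fin m, dot (h α) (h α) := by
    refine Finset.sum_congr rfl fun α _ => ?_
    unfold LiLi.dot
    exact Finset.sum_congr rfl fun i _ => Finset.sum_congr rfl fun j _ => by rw [sq]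
  rw [g1, g2, g3]
  exact main
end

section
/- Let f : ℝⁿ → ℝᵐ be a linear map with singular value decomposition as above (orthonormal bases {a_i}, {b_p}, rank r, f(a_i) = λ_i b_i for i ≤ r, λ_i = 0 for i > r). Let S((x₁,y₁),(x₂,y₂)) = ⟨x₁,x₂⟩ − ⟨y₁,y₂⟩ on ℝⁿ × ℝᵐ, let e_i = (a_i, λ_i b_i)/√(1+λ_i²) be the orthonormal basis of the graph Γ(f), and let ν_p (ν_p = (−λ_p a_p, b_p)/√(1+λ_p²) for p ≤ r, ν_p = (0, b_p) for p > r) be the orthonormal basis of Γ(f)^⊥. Then the matrix of S in the basis (e_1,…,e_n, ν_1,…,ν_m) has the block form: S(e_i, e_j) = ((1−λ_i²)/(1+λ_i²)) δ_{ij}; S(e_i, ν_p) = (−2λ_i/(1+λ_i²)) δ_{ip} for i ≤ n, p ≤ r, and S(e_i, ν_p) = 0 for p > r; S(ν_p, ν_q) = −((1−λ_p²)/(1+λ_p²)) δ_{pq}. -/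
/-- With a singular value decomposition of `f : ℝⁿ → ℝᵐ` as in
Statement 1, the block form of `S((x₁,y₁),(x₂,y₂)) = ⟨x₁,x₂⟩ − ⟨y₁,y₂⟩` in the adapted
orthonormal basis `(e₁,…,e_n, ν₁,…,ν_m)` of `ℝⁿ × ℝᵐ` is:
`S(e i, e j) = ((1−λ_i²)/(1+λ_i²)) δ_{ij}`,
`S(e i, ν p) = (−2λ_i/(1+λ_i²)) δ_{ip}` for `p < r` and `= 0` for `p ≥ r`,
`S(ν p, ν q) = −((1−λ_p²)/(1+λ_p²)) δ_{pq}`. -/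
theorem stmt_3 (n m r : ℕ) (hn : 1 ≤ n) (hm : 1 ≤ m) (hrn : r ≤ n) (hrm : r ≤ m)
    (f : EuclideanSpace ℝ (Fin n) →ₗ[ℝ] EuclideanSpace ℝ (Fin m))
    (hrank : Module.finrank ℝ (LinearMap.range f) = r)
    (a : Fin n → EuclideanSpace ℝ (Fin n))
    (b : Fin m → EuclideanSpace ℝ (Fin m))
    (ha : Orthonormal ℝ a) (ha' : Submodule.span ℝ (Set.range a) = ⊤)
    (hb : Orthonormal ℝ b) (hb' : Submodule.span ℝ (Set.range b) = ⊤)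
    (lam : ℕ → ℝ)
    (hlampos : ∀ i, i < r → 0 < lam i)
    (hlamzero : ∀ i, r ≤ i → lam i = 0)
    (hf1 : ∀ i : Fin n, (hi : (i : ℕ) < r) →
      f (a i) = lam i • b ⟨i, lt_of_lt_of_le hi hrm⟩)
    (hf2 : ∀ i : Fin n, r ≤ (i : ℕ) → f (a i) = 0)
    (e : Fin n → WithLp 2 (EuclideanSpace ℝ (Fin n) × EuclideanSpace ℝ (Fin m)))
    (he : ∀ i, e i = (Real.sqrt (1 + lam i ^ 2))⁻¹ •
      (WithLp.equiv 2 (EuclideanSpace ℝ (Fin n) × EuclideanSpace ℝ (Fin m))).symm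
        (a i, f (a i)))
    (ν : Fin m → WithLp 2 (EuclideanSpace ℝ (Fin n) × EuclideanSpace ℝ (Fin m)))
    (hν : ∀ p, ν p = (Real.sqrt (1 + lam p ^ 2))⁻¹ •
      (WithLp.equiv 2 (EuclideanSpace ℝ (Fin n) × EuclideanSpace ℝ (Fin m))).symm
        (-(lam p) • (if hp : (p : ℕ) < n then a ⟨p, hp⟩ else 0), b p))
    (S : WithLp 2 (EuclideanSpace ℝ (Fin n) × EuclideanSpace ℝ (Fin m)) →
      WithLp 2 (EuclideanSpace ℝ (Fin n) × EuclideanSpace ℝ (Fin m)) → ℝ)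
    (hS : ∀ v w, S v w =
      (inner ℝ ((WithLp.equiv 2 (EuclideanSpace ℝ (Fin n) × EuclideanSpace ℝ (Fin m))) v).1
        ((WithLp.equiv 2 (EuclideanSpace ℝ (Fin n) × EuclideanSpace ℝ (Fin m))) w).1 : ℝ)
      - (inner ℝ ((WithLp.equiv 2 (EuclideanSpace ℝ (Fin n) × EuclideanSpace ℝ (Fin m))) v).2
        ((WithLp.equiv 2 (EuclideanSpace ℝ (Fin n) × EuclideanSpace ℝ (Fin m))) w).2 : ℝ)) :
    (∀ i j : Fin n, S (e i) (e j) =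
      ((1 - lam i ^ 2) / (1 + lam i ^ 2)) * (if i = j then 1 else 0)) ∧
    (∀ (i : Fin n) (p : Fin m), (p : ℕ) < r →
      S (e i) (ν p) =
        (-2 * lam i / (1 + lam i ^ 2)) * (if (i : ℕ) = (p : ℕ) then 1 else 0)) ∧
    (∀ (i : Fin n) (p : Fin m), r ≤ (p : ℕ) → S (e i) (ν p) = 0) ∧
    (∀ p q : Fin m, S (ν p) (ν q) =
      -((1 - lam p ^ 2) / (1 + lam p ^ 2)) * (if p = q then 1 else 0)) := by
  have hpos : ∀ x : ℝ, (0:ℝ) < 1 + x ^ 2 := fun x => by positivity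
  have hc : ∀ x : ℝ, (Real.sqrt (1 + x ^ 2))⁻¹ * (Real.sqrt (1 + x ^ 2))⁻¹ = (1 + x ^ 2)⁻¹ := by
    intro x; rw [← mul_inv, Real.mul_self_sqrt (hpos x).le]
  have hS' : ∀ (c d : ℝ) (x1 x2 : EuclideanSpace ℝ (Fin n))
      (y1 y2 : EuclideanSpace ℝ (Fin m)),
      S (c • (WithLp.equiv 2 (EuclideanSpace ℝ (Fin n) × EuclideanSpace ℝ (Fin m))).symm (x1, y1))
        (d • (WithLp.equiv 2 (EuclideanSpace ℝ (Fin n) × EuclideanSpace ℝ (Fin m))).symm (x2, y2))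
        = c * d * ((inner ℝ x1 x2 : ℝ) - (inner ℝ y1 y2 : ℝ)) := by
    intro c d x1 x2 y1 y2
    rw [hS]
    simp only [WithLp.equiv_apply, WithLp.equiv_symm_apply, WithLp.ofLp_smul, WithLp.ofLp_toLp, Prod.smul_fst, Prod.smul_snd,
      real_inner_smul_left, real_inner_smul_right]
    ring
  have hA : ∀ i j : Fin n, (inner ℝ (a i) (a j) : ℝ) = if i = j then 1 else 0 :=
    orthonormal_iff_ite.mp ha
  have hB : ∀ p q : Fin m, (inner ℝ (b p) (b q) : ℝ) = if p = q then 1 else 0 :=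
    orthonormal_iff_ite.mp hb
  have hfab : ∀ i j : Fin n, (inner ℝ (f (a i)) (f (a j)) : ℝ)
      = if i = j then lam i ^ 2 else 0 := by
    intro i j
    by_cases hi : (i : ℕ) < r
    · by_cases hj : (j : ℕ) < r
      · rw [hf1 i hi, hf1 j hj, real_inner_smul_left, real_inner_smul_right, hB]
        by_cases hij : i = j
        · subst hij; simp [pow_two]
        · have h2 : (⟨(i:ℕ), lt_of_lt_of_le hi hrm⟩ : Fin m)
              ≠ ⟨(j:ℕ), lt_of_lt_of_le hj hrm⟩ := by
            simp only [ne_eq, Fin.mk.injEq]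
            exact fun h => hij (Fin.ext h)
          simp [h2, hij]
      · have hij : i ≠ j := fun h => hj (h ▸ hi)
        rw [hf2 j (le_of_not_gt hj)]
        simp [hij]
    · rw [hf2 i (le_of_not_gt hi)]
      by_cases hij : i = j
      · subst hij; simp [hlamzero _ (le_of_not_gt hi)]
      · simp [hij]
  have hfb : ∀ (i : Fin n) (p : Fin m), (inner ℝ (f (a i)) (b p) : ℝ)
      = if h : (i : ℕ) < r ∧ (i : ℕ) = (p : ℕ) then lam i else 0 := by
    intro i p
    by_cases hi : (i : ℕ) < r
    · rw [hf1 i hi, real_inner_smul_left, hB]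
      by_cases hip : (i : ℕ) = (p : ℕ)
      · have h2 : (⟨(i:ℕ), lt_of_lt_of_le hi hrm⟩ : Fin m) = p := Fin.ext hip
        have h4 : (i : ℕ) < r ∧ (i : ℕ) = (p : ℕ) := ⟨hi, hip⟩
        rw [if_pos h2, dif_pos h4]
        simp
      · have h2 : (⟨(i:ℕ), lt_of_lt_of_le hi hrm⟩ : Fin m) ≠ p := by
          simp only [ne_eq, Fin.ext_iff]; exact hip
        simp [h2, hip]
    · rw [hf2 i (le_of_not_gt hi)]
      simp [hi]
  refine ⟨fun i j => ?_, fun i p hp => ?_, fun i p hp => ?_, fun p q => ?_⟩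
  · rw [he i, he j, hS', hA, hfab]
    by_cases hij : i = j
    · subst hij
      simp only [if_pos rfl, ↓reduceIte]
      rw [hc]
      field_simp
    · simp [hij]
  · have hpn : (p : ℕ) < n := lt_of_lt_of_le hp hrn
    rw [he i, hν p, dif_pos hpn, hS', hfb]
    rw [inner_smul_right]
    rw [hA]
    by_cases hip : (i : ℕ) = (p : ℕ)
    · have hir : (i : ℕ) < r := hip ▸ hp
      have h2 : i = ⟨(p:ℕ), hpn⟩ := Fin.ext hip
      have hl : lam (p : ℕ) = lam (i : ℕ) := by rw [hip]
      have h4 : (i : ℕ) < r ∧ (i : ℕ) = (p : ℕ) := ⟨hir, hip⟩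
      rw [if_pos h2, dif_pos h4, if_pos hip, hl, hc]
      have := (hpos (lam i)).ne'
      field_simp
      ring
    · have h2 : i ≠ ⟨(p:ℕ), hpn⟩ := by
        simp only [ne_eq, Fin.ext_iff]; exact hip
      have h3 : ¬((i : ℕ) < r ∧ (i : ℕ) = (p : ℕ)) := fun h => hip h.2
      simp [h2, h3, hip]
  · have hl : lam (p : ℕ) = 0 := hlamzero _ hp
    rw [he i, hν p, hS', hfb]
    have h3 : ¬((i : ℕ) < r ∧ (i : ℕ) = (p : ℕ)) := by
      rintro ⟨h1, h2⟩; omega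
    rw [inner_smul_right]
    simp [hl, h3]
  · rw [hν p, hν q, hS']
    rw [real_inner_smul_left, inner_smul_right, hB]
    by_cases hpq : p = q
    · subst hpq
      by_cases hpr : (p : ℕ) < r
      · have hpn : (p : ℕ) < n := lt_of_lt_of_le hpr hrn
        rw [dif_pos hpn, hA]
        simp only [if_pos rfl]
        rw [hc]
        have := (hpos (lam (p:ℕ))).ne'
        field_simp
        ring
      · have hl : lam (p : ℕ) = 0 := hlamzero _ (le_of_not_gt hpr)
        rw [hl, hc]
        simp
    · have hl : ∀ x y : EuclideanSpace ℝ (Fin n),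
          -(lam (p:ℕ)) * (-(lam (q:ℕ)) * (inner ℝ x y : ℝ)) - (0:ℝ)
            = lam (p:ℕ) * lam (q:ℕ) * (inner ℝ x y : ℝ) := by intro x y; ring
      by_cases hpr : (p : ℕ) < r
      · by_cases hqr : (q : ℕ) < r
        · have hpn : (p : ℕ) < n := lt_of_lt_of_le hpr hrn
          have hqn : (q : ℕ) < n := lt_of_lt_of_le hqr hrn
          rw [dif_pos hpn, dif_pos hqn, hA]
          have h2 : (⟨(p:ℕ), hpn⟩ : Fin n) ≠ ⟨(q:ℕ), hqn⟩ := by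
            simp only [ne_eq, Fin.mk.injEq]
            exact fun h => hpq (Fin.ext h)
          simp [h2, hpq]
        · have hl2 : lam (q : ℕ) = 0 := hlamzero _ (le_of_not_gt hqr)
          simp [hl2, hpq]
      · have hl2 : lam (p : ℕ) = 0 := hlamzero _ (le_of_not_gt hpr)
        simp [hl2, hpq]
end

section
/- Let λ₁, λ₂ be real numbers and set S₁₁ = (1−λ₁²)/(1+λ₁²), S₂₂ = (1−λ₂²)/(1+λ₂²), T₁₁ = 2λ₁/(1+λ₁²), T₂₂ = 2λ₂/(1+λ₂²) (so that S₁₁² + T₁₁² = S₂₂² + T₂₂² = 1). Then for all real numbers h_{3c1}, h_{4c2} (c = 1, 2): 4(S₁₁ + S₂₂)(S₁₁ − S₂₂) ∑_{c=1}^{2} (h_{3c1}² − h_{4c2}²) + 4 ∑_{c=1}^{2} (T₁₁ h_{3c1} + T₂₂ h_{4c2})² = 4 ∑_{c=1}^{2} (T₁₁ h_{4c2} + T₂₂ h_{3c1})². -/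
/-- The key algebraic identity (equation (3.17) of the paper): with
`S₁₁ = (1−λ₁²)/(1+λ₁²)`, `S₂₂ = (1−λ₂²)/(1+λ₂²)`, `T₁₁ = 2λ₁/(1+λ₁²)`,
`T₂₂ = 2λ₂/(1+λ₂²)` (so `S₁₁² + T₁₁² = S₂₂² + T₂₂² = 1`), for all real `h_{3c1}, h_{4c2}`:
`4(S₁₁+S₂₂)(S₁₁−S₂₂)∑_c(h_{3c1}²−h_{4c2}²) + 4∑_c(T₁₁h_{3c1}+T₂₂h_{4c2})²
  = 4∑_c(T₁₁h_{4c2}+T₂₂h_{3c1})²`. -/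
theorem stmt_5 (l1 l2 : ℝ) (h3 h4 : Fin 2 → ℝ)
    (S11 S22 T11 T22 : ℝ)
    (hS11 : S11 = (1 - l1 ^ 2) / (1 + l1 ^ 2))
    (hS22 : S22 = (1 - l2 ^ 2) / (1 + l2 ^ 2))
    (hT11 : T11 = 2 * l1 / (1 + l1 ^ 2))
    (hT22 : T22 = 2 * l2 / (1 + l2 ^ 2)) :
    S11 ^ 2 + T11 ^ 2 = 1 ∧ S22 ^ 2 + T22 ^ 2 = 1 ∧
    4 * (S11 + S22) * (S11 - S22) * (∑ c : Fin 2, ((h3 c) ^ 2 - (h4 c) ^ 2))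
      + 4 * ∑ c : Fin 2, (T11 * h3 c + T22 * h4 c) ^ 2
    = 4 * ∑ c : Fin 2, (T11 * h4 c + T22 * h3 c) ^ 2 := by
  have d1 : (1 + l1 ^ 2) ≠ 0 := by positivity
  have d2 : (1 + l2 ^ 2) ≠ 0 := by positivity
  have e1 : S11 ^ 2 + T11 ^ 2 = 1 := by rw [hS11, hT11]; field_simp; ring
  have e2 : S22 ^ 2 + T22 ^ 2 = 1 := by rw [hS22, hT22]; field_simp; ring
  refine ⟨e1, e2, ?_⟩
  simp only [Fin.sum_univ_two]
  nlinarith [e1, e2, sq_nonneg (h3 0), sq_nonneg (h4 0)]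
end

section
/- Let h_{αij} be real numbers for α ∈ {3,4} and i, j ∈ {1,2}, symmetric in the last two indices (h_{αij} = h_{αji}), and satisfying the Lagrangian symmetry h_{3c2} = h_{4c1} for c = 1, 2. Set H_α = h_{α11} + h_{α22}, |H|² = H₃² + H₄², and |A|² = ∑_{α∈{3,4}} ∑_{i,j∈{1,2}} h_{αij}². Then ∑_{c=1}^{2} (h_{3c1}² − h_{4c2}²) = (h_{311} − h_{322}) H₃ + (h_{411} − h_{422}) H₄, and consequently | ∑_{c=1}^{2} (h_{3c1}² − h_{4c2}²) | ≤ |h_{311} − h_{322}| · |H₃| + |h_{411} − h_{422}| · |H₄| ≤ 2√2 · |A| · |H|. -/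
set_option maxHeartbeats 1000000 in
/-- For second-fundamental-form coefficients `h α i j` of a Lagrangian
surface (indices `α = 0,1` standing for `3,4`, and `i, j = 0,1` standing for `1,2`),
symmetric in the last two indices and with the Lagrangian symmetry `h_{3c2} = h_{4c1}`,
one has `∑_c (h_{3c1}² − h_{4c2}²) = (h_{311}−h_{322})H₃ + (h_{411}−h_{422})H₄`, whence
`|∑_c (h_{3c1}² − h_{4c2}²)| ≤ |h_{311}−h_{322}||H₃| + |h_{411}−h_{422}||H₄|
  ≤ 2√2 |A| |H|`. -/
theorem stmt_8 (h : Fin 2 → Fin 2 → Fin 2 → ℝ)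
    (hsymm : ∀ (α : Fin 2) (i j : Fin 2), h α i j = h α j i)
    (hlag : ∀ c : Fin 2, h 0 c 1 = h 1 c 0)
    (H : Fin 2 → ℝ) (hH : ∀ α, H α = h α 0 0 + h α 1 1)
    (normA normH : ℝ)
    (hnormA : normA = Real.sqrt (∑ α : Fin 2, ∑ i : Fin 2, ∑ j : Fin 2, (h α i j) ^ 2))
    (hnormH : normH = Real.sqrt (H 0 ^ 2 + H 1 ^ 2)) :
    (∑ c : Fin 2, ((h 0 c 0) ^ 2 - (h 1 c 1) ^ 2)
      = (h 0 0 0 - h 0 1 1) * H 0 + (h 1 0 0 - h 1 1 1) * H 1) ∧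
    |∑ c : Fin 2, ((h 0 c 0) ^ 2 - (h 1 c 1) ^ 2)|
      ≤ |h 0 0 0 - h 0 1 1| * |H 0| + |h 1 0 0 - h 1 1 1| * |H 1| ∧
    |h 0 0 0 - h 0 1 1| * |H 0| + |h 1 0 0 - h 1 1 1| * |H 1|
      ≤ 2 * Real.sqrt 2 * normA * normH := by
  have eq1 : h 0 1 0 = h 1 0 0 := by rw [hsymm, hlag 0]
  have eq2 : h 1 0 1 = h 0 1 1 := by rw [hsymm 1 0 1, ← hlag 1]
  have key : (∑ c : Fin 2, ((h 0 c 0) ^ 2 - (h 1 c 1) ^ 2)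
      = (h 0 0 0 - h 0 1 1) * H 0 + (h 1 0 0 - h 1 1 1) * H 1) := by
    simp only [Fin.sum_univ_two, hH, eq1, eq2]
    ring
  refine ⟨key, ?_, ?_⟩
  · rw [key]
    calc |(h 0 0 0 - h 0 1 1) * H 0 + (h 1 0 0 - h 1 1 1) * H 1|
        ≤ |(h 0 0 0 - h 0 1 1) * H 0| + |(h 1 0 0 - h 1 1 1) * H 1| := abs_add_le _ _
      _ = |h 0 0 0 - h 0 1 1| * |H 0| + |h 1 0 0 - h 1 1 1| * |H 1| := by
          rw [abs_mul, abs_mul]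
  · set S : ℝ := ∑ α : Fin 2, ∑ i : Fin 2, ∑ j : Fin 2, (h α i j) ^ 2 with hS
    have hSnn : 0 ≤ S := Finset.sum_nonneg fun _ _ =>
      Finset.sum_nonneg fun _ _ => Finset.sum_nonneg fun _ _ => sq_nonneg _
    have hAnn : 0 ≤ normA := hnormA ▸ Real.sqrt_nonneg _
    have hHnn : 0 ≤ normH := hnormH ▸ Real.sqrt_nonneg _
    have hA2 : normA ^ 2 = S := by rw [hnormA]; exact Real.sq_sqrt hSnn
    have hH2 : normH ^ 2 = H 0 ^ 2 + H 1 ^ 2 := by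
      rw [hnormH]; exact Real.sq_sqrt (by positivity)
    have hSexp : S = (h 0 0 0)^2 + (h 0 0 1)^2 + (h 0 1 0)^2 + (h 0 1 1)^2
        + (h 1 0 0)^2 + (h 1 0 1)^2 + (h 1 1 0)^2 + (h 1 1 1)^2 := by
      simp [hS, Fin.sum_univ_two]; ring
    have hH0 : |H 0| ≤ normH := by
      have : |H 0| = Real.sqrt ((H 0)^2) := (Real.sqrt_sq_eq_abs _).symm
      rw [this, hnormH]
      exact Real.sqrt_le_sqrt (by nlinarith [sq_nonneg (H 1)])
    have hH1 : |H 1| ≤ normH := by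
      have : |H 1| = Real.sqrt ((H 1)^2) := (Real.sqrt_sq_eq_abs _).symm
      rw [this, hnormH]
      exact Real.sqrt_le_sqrt (by nlinarith [sq_nonneg (H 0)])
    have hsqrt2 : Real.sqrt 2 ^ 2 = 2 := Real.sq_sqrt (by norm_num)
    have ha : |h 0 0 0 - h 0 1 1| ≤ Real.sqrt 2 * normA := by
      have h1 : |h 0 0 0 - h 0 1 1| = Real.sqrt ((h 0 0 0 - h 0 1 1)^2) :=
        (Real.sqrt_sq_eq_abs _).symm
      have h2 : Real.sqrt 2 * normA = Real.sqrt (2 * S) := by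
        rw [hnormA, ← Real.sqrt_mul (by norm_num)]
      rw [h1, h2, hSexp]
      refine Real.sqrt_le_sqrt ?_
      nlinarith [sq_nonneg (h 0 0 0 + h 0 1 1), sq_nonneg (h 0 0 1), sq_nonneg (h 0 1 0),
        sq_nonneg (h 1 0 0), sq_nonneg (h 1 0 1), sq_nonneg (h 1 1 0), sq_nonneg (h 1 1 1)]
    have hb : |h 1 0 0 - h 1 1 1| ≤ Real.sqrt 2 * normA := by
      have h1 : |h 1 0 0 - h 1 1 1| = Real.sqrt ((h 1 0 0 - h 1 1 1)^2) :=
        (Real.sqrt_sq_eq_abs _).symm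
      have h2 : Real.sqrt 2 * normA = Real.sqrt (2 * S) := by
        rw [hnormA, ← Real.sqrt_mul (by norm_num)]
      rw [h1, h2, hSexp]
      refine Real.sqrt_le_sqrt ?_
      nlinarith [sq_nonneg (h 1 0 0 + h 1 1 1), sq_nonneg (h 0 0 0), sq_nonneg (h 0 0 1),
        sq_nonneg (h 0 1 0), sq_nonneg (h 0 1 1), sq_nonneg (h 1 0 1), sq_nonneg (h 1 1 0)]
    have h2nn : (0:ℝ) ≤ Real.sqrt 2 := Real.sqrt_nonneg 2
    calc |h 0 0 0 - h 0 1 1| * |H 0| + |h 1 0 0 - h 1 1 1| * |H 1|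
        ≤ (Real.sqrt 2 * normA) * normH + (Real.sqrt 2 * normA) * normH :=
          add_le_add (mul_le_mul ha hH0 (abs_nonneg _) (by positivity))
            (mul_le_mul hb hH1 (abs_nonneg _) (by positivity))
      _ = 2 * Real.sqrt 2 * normA * normH := by ring
end

section
/- Let a, b > 0 be real constants and let u : [0, ∞) → ℝ be continuous on [0, ∞), differentiable on (0, ∞), with u(t) ≥ 0 for all t, and suppose u satisfies the differential inequality u′(t) ≤ ( −a·u(t) + b/t ) · u(t) for all t > 0. Then u(t) ≤ (b+1)/(a·t) for all t > 0. In particular, the function w(t) = (b+1)/(a·t) is an exact solution of w′ = (−a·w + b/t)·w on (0, ∞), and t·u(t) ≤ (b+1)/a is bounded. -/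
private lemma deriv_c_div (c : ℝ) {t : ℝ} (ht : t ≠ 0) :
    deriv (fun s : ℝ => c / s) t = -c / t ^ 2 := by
  have h : (fun s : ℝ => c / s) = fun s : ℝ => c * s⁻¹ := by
    funext s; rw [div_eq_mul_inv]
  rw [h, deriv_const_mul _ (differentiableAt_inv ht), deriv_inv]
  field_simp

private lemma key_arith (a b c x U : ℝ) (ha : 0 < a) (hb : 0 < b) (hx : 0 < x)
    (hc : a * c = b + 1) (hU : c / x < U) :
    (-a * U + b / x) * U + c / x ^ 2 < 0 := by
  rw [div_lt_iff₀ hx] at hU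
  have hc0 : 0 < c := by nlinarith
  have hx2 : (0 : ℝ) < x ^ 2 := by positivity
  have h : (-a * U + b / x) * U + c / x ^ 2
      = (-(a * (U * x) ^ 2) + b * (U * x) + c) / x ^ 2 := by
    field_simp
  rw [h]
  apply div_neg_of_neg_of_pos _ hx2
  nlinarith [mul_pos (sub_pos.2 hU) (show 0 < a * (U * x) + a * c - b by nlinarith)]

/-- ODE comparison: if `u ≥ 0` is continuous on `[0,∞)`, differentiable
on `(0,∞)` and satisfies `u' ≤ (−a u + b/t) u` for `t > 0` (with `a, b > 0`), then
`u t ≤ (b+1)/(a t)` for all `t > 0`; moreover `w t = (b+1)/(a t)` is an exact solution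
of `w' = (−a w + b/t) w` on `(0,∞)`, and `t * u t ≤ (b+1)/a` is bounded. -/
theorem stmt_9 (a b : ℝ) (ha : 0 < a) (hb : 0 < b)
    (u : ℝ → ℝ)
    (hcont : ContinuousOn u (Set.Ici (0 : ℝ)))
    (hdiff : ∀ t : ℝ, 0 < t → DifferentiableAt ℝ u t)
    (hnonneg : ∀ t : ℝ, 0 ≤ t → 0 ≤ u t)
    (hineq : ∀ t : ℝ, 0 < t → deriv u t ≤ (-a * u t + b / t) * u t) :
    (∀ t : ℝ, 0 < t → u t ≤ (b + 1) / (a * t)) ∧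
    (∀ t : ℝ, 0 < t →
      deriv (fun s : ℝ => (b + 1) / (a * s)) t
        = (-a * ((b + 1) / (a * t)) + b / t) * ((b + 1) / (a * t))) ∧
    (∀ t : ℝ, 0 < t → t * u t ≤ (b + 1) / a) := by
  set c : ℝ := (b + 1) / a with hc_def
  have hc : a * c = b + 1 := by rw [hc_def]; field_simp
  have hc0 : 0 < c := by positivity
  -- main comparison
  have main : ∀ t : ℝ, 0 < t → u t ≤ c / t := by
    intro t₁ ht₁
    by_contra hcon
    push_neg at hcon
    -- find small t₀ with u t₀ ≤ c / t₀
    have h0 : ContinuousWithinAt u (Set.Ici (0:ℝ)) 0 := hcont 0 Set.self_mem_Ici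
    have hev : ∀ᶠ s in nhdsWithin 0 (Set.Ici (0:ℝ)), u s < u 0 + 1 :=
      h0.eventually_lt_const (lt_add_one (u 0))
    rw [Filter.eventually_iff, mem_nhdsGE_iff_exists_Icc_subset] at hev
    obtain ⟨ε, hε, hIcc⟩ := hev
    have hu0 : 0 < u 0 + 1 := by linarith [hnonneg 0 le_rfl]
    set t₀ : ℝ := min ε (min t₁ (c / (u 0 + 1))) with ht₀_def
    have ht₀ : 0 < t₀ := by positivity
    have ht₀ε : t₀ ≤ ε := min_le_left _ _
    have ht₀t₁ : t₀ ≤ t₁ := le_trans (min_le_right _ _) (min_le_left _ _)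
    have ht₀c : t₀ ≤ c / (u 0 + 1) := le_trans (min_le_right _ _) (min_le_right _ _)
    have hut₀ : u t₀ ≤ c / t₀ := by
      have h1 : u t₀ < u 0 + 1 := hIcc ⟨le_of_lt ht₀, ht₀ε⟩
      have h2 : u 0 + 1 ≤ c / t₀ := by
        rw [le_div_iff₀ ht₀]
        calc (u 0 + 1) * t₀ ≤ (u 0 + 1) * (c / (u 0 + 1)) := by
              exact mul_le_mul_of_nonneg_left ht₀c (le_of_lt hu0)
        _ = c := by field_simp
      linarith
    -- the set where u ≤ c / t on [t₀, t₁]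
    set S : Set ℝ := Set.Icc t₀ t₁ ∩ (fun t => u t - c / t) ⁻¹' Set.Iic 0 with hS_def
    have hScont : ContinuousOn (fun t => u t - c / t) (Set.Icc t₀ t₁) := by
      intro x hx
      have hx0 : 0 < x := lt_of_lt_of_le ht₀ hx.1
      exact (((hdiff x hx0).continuousAt).sub
        ((continuousAt_const.div continuousAt_id (ne_of_gt hx0)))).continuousWithinAt
    have hSclosed : IsClosed S := hScont.preimage_isClosed_of_isClosed isClosed_Icc isClosed_Iic
    have hScompact : IsCompact S :=
      (isCompact_Icc).of_isClosed_subset hSclosed Set.inter_subset_left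
    have hSne : S.Nonempty := ⟨t₀, ⟨le_refl _, ht₀t₁⟩, by simpa using sub_nonpos.2 hut₀⟩
    set s₀ : ℝ := sSup S with hs₀_def
    have hs₀S : s₀ ∈ S := hScompact.sSup_mem hSne
    have hs₀0 : 0 < s₀ := lt_of_lt_of_le ht₀ hs₀S.1.1
    have ht₁S : t₁ ∉ S := by
      intro h
      have := h.2
      simp only [Set.mem_preimage, Set.mem_Iic, sub_nonpos] at this
      linarith
    have hs₀t₁ : s₀ < t₁ := lt_of_le_of_ne hs₀S.1.2 (fun h => ht₁S (h ▸ hs₀S))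
    -- on (s₀, t₁], u > c / t
    have hbig : ∀ x ∈ Set.Ioc s₀ t₁, c / x < u x := by
      intro x hx
      by_contra hle
      push_neg at hle
      have hxS : x ∈ S := ⟨⟨le_trans hs₀S.1.1 (le_of_lt hx.1), hx.2⟩, by
        simpa using sub_nonpos.2 hle⟩
      exact absurd (le_csSup hScompact.bddAbove hxS) (not_le.2 hx.1)
    -- g := u - c/t is strictly decreasing on [s₀, t₁]
    have hanti : StrictAntiOn (fun t => u t - c / t) (Set.Icc s₀ t₁) := by
      apply strictAntiOn_of_deriv_neg (convex_Icc _ _)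
      · exact hScont.mono (Set.Icc_subset_Icc_left hs₀S.1.1)
      · intro x hx
        rw [interior_Icc] at hx
        have hx0 : 0 < x := lt_trans hs₀0 hx.1
        have hdu : DifferentiableAt ℝ u x := hdiff x hx0
        have hdc : DifferentiableAt ℝ (fun t : ℝ => c / t) x := by
          exact (differentiableAt_const c).div differentiableAt_id (ne_of_gt hx0)
        rw [deriv_fun_sub hdu hdc, deriv_c_div c (ne_of_gt hx0)]
        have hxu : c / x < u x := hbig x ⟨hx.1, le_of_lt hx.2⟩
        have := key_arith a b c x (u x) ha hb hx0 hc hxu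
        have h2 := hineq x hx0
        have heq : -(-c / x ^ 2) = c / x ^ 2 := by ring
        linarith [this, h2]
    have hlt := hanti ⟨le_refl s₀, le_of_lt hs₀t₁⟩ ⟨le_of_lt hs₀t₁, le_refl t₁⟩ hs₀t₁
    have hs₀le : u s₀ - c / s₀ ≤ 0 := by
      have := hs₀S.2
      simpa using this
    have ht₁gt : 0 < u t₁ - c / t₁ := sub_pos.2 hcon
    simp only at hlt
    linarith
  refine ⟨by
      intro t ht
      rw [← div_div]
      exact main t ht
      , ?_, ?_⟩
  · intro t ht
    have h : (fun s : ℝ => (b + 1) / (a * s)) = fun s : ℝ => c / s := by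
      funext s; rw [hc_def]; ring
    rw [h, deriv_c_div c (ne_of_gt ht), hc_def]
    field_simp
    ring
  · intro t ht
    have := main t ht
    calc t * u t ≤ t * (c / t) := by nlinarith
    _ = c := by field_simp
end
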